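/- arXiv:1507.01703 — 6 statements merged into one kernel-verified Lean document; each statement's English description precedes it below -/
import Mathlib

section
/- The infinite sum of 1/(i * binom(2i, i)) for i from 1 to infinity equals π/(3√3). -/
open Real Finset MeasureTheory intervalIntegral

lemma beta_nat : ∀ (m n : ℕ), (∫ t in (0:ℝ)..1, t^n * (1-t)^m)
    = (Nat.factorial n * Nat.factorial m : ℝ) / (Nat.factorial (n+m+1)) := by
  intro m
  induction m with
  | zero =>
    intro n
    simp only [pow_zero, mul_one, integral_pow, Nat.factorial_zero, Nat.cast_one, one_mul]
    have h0 : (n.factorial:ℝ) ≠ 0 := by positivity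
    rw [Nat.factorial_succ]
    push_cast
    field_simp
    simp
  | succ m ih =>
    intro n
    have hne : ((n:ℝ)+1) ≠ 0 := by positivity
    have hu : ∀ x ∈ Set.uIcc (0:ℝ) 1, HasDerivAt (fun t : ℝ => (1-t)^(m+1))
        (((m:ℝ)+1) * (1-x)^m * (-1)) x := by
      intro x _
      have h1 : HasDerivAt (fun t : ℝ => (1-t)) (-1) x := by
        simpa using (hasDerivAt_id x).const_sub 1
      have := h1.fun_pow (m+1)
      simpa using this
    have hv : ∀ x ∈ Set.uIcc (0:ℝ) 1, HasDerivAt (fun t : ℝ => t^(n+1)/((n:ℝ)+1))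
        (x^n) x := by
      intro x _
      have := (hasDerivAt_pow (n+1) x).div_const ((n:ℝ)+1)
      refine this.congr_deriv ?_
      field_simp
      simp
    have hiu : IntervalIntegrable (fun x : ℝ => ((m:ℝ)+1) * (1-x)^m * (-1)) volume 0 1 :=
      (by continuity : Continuous fun x : ℝ => ((m:ℝ)+1) * (1-x)^m * (-1)).intervalIntegrable 0 1
    have hiv : IntervalIntegrable (fun x : ℝ => x^n) volume 0 1 :=
      (continuous_pow n).intervalIntegrable 0 1
    have key := intervalIntegral.integral_mul_deriv_eq_deriv_mul hu hv hiu hiv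
    have e1 : (∫ t in (0:ℝ)..1, t^n * (1-t)^(m+1))
        = ∫ t in (0:ℝ)..1, (1-t)^(m+1) * t^n := by
      apply intervalIntegral.integral_congr; intro x _; ring
    rw [e1, key]
    have e2 : (∫ x in (0:ℝ)..1, ((m:ℝ)+1) * (1-x)^m * (-1) * (x^(n+1)/((n:ℝ)+1)))
        = (-((m:ℝ)+1)/((n:ℝ)+1)) * ∫ x in (0:ℝ)..1, x^(n+1) * (1-x)^m := by
      rw [← intervalIntegral.integral_const_mul]
      apply intervalIntegral.integral_congr; intro x _; field_simp
    rw [e2, ih (n+1)]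
    have h2 : ((n+1+m+1).factorial : ℝ) = (n+(m+1)+1).factorial := by norm_num; ring_nf
    rw [h2]
    have hfne : ((n+(m+1)+1).factorial : ℝ) ≠ 0 := by positivity
    simp only [Nat.factorial_succ]
    push_cast
    field_simp
    ring

lemma qpos (t : ℝ) : 0 < 1 - t*(1-t) := by nlinarith [sq_nonneg (2*t-1)]

lemma ftc_eval : (∫ t in (0:ℝ)..1, (1-t) * (1 - t*(1-t))⁻¹) = π / (3 * Real.sqrt 3) := by
  have hs : Real.sqrt 3 ^ 2 = 3 := Real.sq_sqrt (by norm_num)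
  have hs0 : Real.sqrt 3 ≠ 0 := by positivity
  set F : ℝ → ℝ := fun t => -(1/2) * Real.log (1 - t*(1-t))
      + (1/Real.sqrt 3) * Real.arctan ((2*t-1)/Real.sqrt 3) with hF
  have hderiv : ∀ x ∈ Set.uIcc (0:ℝ) 1, HasDerivAt F ((1-x) * (1 - x*(1-x))⁻¹) x := by
    intro x _
    have hq : (0:ℝ) < 1 - x*(1-x) := qpos x
    have hp : HasDerivAt (fun t : ℝ => 1 - t*(1-t)) (2*x-1) x := by
      have h1 : HasDerivAt (fun t : ℝ => t*(1-t)) (1-2*x) x := by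
        have := (hasDerivAt_id x).mul ((hasDerivAt_id x).const_sub 1)
        refine this.congr_deriv ?_; simp; ring
      have := h1.const_sub 1
      refine this.congr_deriv ?_; ring
    have hlog : HasDerivAt (fun t : ℝ => -(1/2) * Real.log (1 - t*(1-t)))
        ((1-2*x)/(2*(1-x*(1-x)))) x := by
      have := (hp.log hq.ne').const_mul (-(1/2))
      refine this.congr_deriv ?_
      field_simp
      ring
    have hinner : HasDerivAt (fun t : ℝ => (2*t-1)/Real.sqrt 3) (2/Real.sqrt 3) x := by
      have := (((hasDerivAt_id x).const_mul 2).sub_const 1).div_const (Real.sqrt 3)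
      simpa using this
    have hd : (1:ℝ) + ((2*x-1)/Real.sqrt 3)^2 = (3 + (2*x-1)^2)/3 := by
      rw [div_pow, hs]; field_simp
    have h34 : (3:ℝ) + (2*x-1)^2 = 4*(1-x*(1-x)) := by ring
    have harc : HasDerivAt (fun t : ℝ => (1/Real.sqrt 3) * Real.arctan ((2*t-1)/Real.sqrt 3))
        (1/(2*(1-x*(1-x)))) x := by
      have := hinner.arctan.const_mul (1/Real.sqrt 3)
      refine this.congr_deriv ?_
      rw [hd, h34]
      rw [div_div_eq_mul_div, div_mul_eq_mul_div, mul_comm]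
      field_simp
      linear_combination (-4) * hs
    have := hlog.add harc
    refine this.congr_deriv ?_
    field_simp
    ring
  have hcont : Continuous fun t : ℝ => (1-t) * (1 - t*(1-t))⁻¹ := by
    apply Continuous.mul (by continuity)
    exact (continuous_const.sub (continuous_id.mul (continuous_const.sub continuous_id))).inv₀
      (fun t => (qpos t).ne')
  rw [intervalIntegral.integral_eq_sub_of_hasDerivAt hderiv (hcont.intervalIntegrable 0 1)]
  have ha1 : Real.arctan ((Real.sqrt 3)⁻¹) = π/6 := by
    rw [show ((Real.sqrt 3)⁻¹:ℝ) = 1/Real.sqrt 3 by rw [one_div], ← Real.tan_pi_div_six,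
      Real.arctan_tan] <;> linarith [Real.pi_pos]
  have hneg : Real.arctan (-(Real.sqrt 3)⁻¹) = -(π/6) := by rw [Real.arctan_neg, ha1]
  simp only [hF]
  norm_num [hneg, ha1]
  have hneg2 : Real.arctan (-1/Real.sqrt 3) = -(π/6) := by
    rw [show (-1/Real.sqrt 3 : ℝ) = -((Real.sqrt 3)⁻¹) by rw [neg_div, one_div], hneg]
  field_simp
  rw [← neg_div, hneg2]
  ring


theorem stmt_0 : (∑' i : ℕ, (1:ℝ) / (((i:ℝ)+1) * ((Nat.choose (2*(i+1)) (i+1)) : ℝ))) = Real.pi / (3 * Real.sqrt 3) := by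
  have hterm : ∀ n : ℕ, (1:ℝ) / (((n:ℝ)+1) * ((Nat.choose (2*(n+1)) (n+1)) : ℝ))
      = ∫ t in Set.Ioc (0:ℝ) 1, t^n * (1-t)^(n+1) := by
    intro n
    rw [← intervalIntegral.integral_of_le (zero_le_one), beta_nat (n+1) n]
    have hch : (Nat.choose (2*(n+1)) (n+1)) * Nat.factorial (n+1) * Nat.factorial (n+1)
        = Nat.factorial (2*(n+1)) := by
      have := Nat.choose_mul_factorial_mul_factorial (n := 2*(n+1)) (k := n+1) (by omega)
      convert this using 3 <;> omega
    have h2 : n + (n+1) + 1 = 2*(n+1) := by omega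
    rw [h2]
    have hfs : (Nat.factorial (n+1) : ℝ) = ((n:ℝ)+1) * Nat.factorial n := by
      rw [Nat.factorial_succ]; push_cast; ring
    have hne1 : (Nat.factorial n : ℝ) ≠ 0 := by positivity
    have hne2 : (Nat.factorial (2*(n+1)) : ℝ) ≠ 0 := by positivity
    have hne3 : ((n:ℝ)+1) ≠ 0 := by positivity
    have hne4 : ((Nat.choose (2*(n+1)) (n+1)) : ℝ) ≠ 0 := by
      have : 0 < Nat.choose (2*(n+1)) (n+1) := Nat.choose_pos (by omega)
      positivity
    have hchR : ((Nat.choose (2*(n+1)) (n+1)) : ℝ) * Nat.factorial (n+1) * Nat.factorial (n+1)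
        = Nat.factorial (2*(n+1)) := by exact_mod_cast congrArg Nat.cast hch
    have key : (((n:ℝ)+1) * (Nat.choose (2*(n+1)) (n+1)) : ℝ) * ((Nat.factorial n : ℝ) * (Nat.factorial (n+1) : ℝ)) = (Nat.factorial (2*(n+1)) : ℝ) := by
      calc (((n:ℝ)+1) * (Nat.choose (2*(n+1)) (n+1)) : ℝ) * ((Nat.factorial n : ℝ) * (Nat.factorial (n+1) : ℝ))
          = ((Nat.choose (2*(n+1)) (n+1)) : ℝ) * (Nat.factorial (n+1) : ℝ) * (((n:ℝ)+1) * (Nat.factorial n : ℝ)) := by ring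
        _ = ((Nat.choose (2*(n+1)) (n+1)) : ℝ) * (Nat.factorial (n+1) : ℝ) * (Nat.factorial (n+1) : ℝ) := by rw [← hfs]
        _ = (Nat.factorial (2*(n+1)) : ℝ) := hchR
    rw [div_eq_div_iff (by positivity) hne2]
    linear_combination -key
  rw [tsum_congr hterm]
  have hmeas : ∀ n : ℕ, AEStronglyMeasurable (fun t : ℝ => t^n * (1-t)^(n+1))
      (volume.restrict (Set.Ioc (0:ℝ) 1)) := by
    intro n
    exact ((continuous_pow n).mul ((continuous_const.sub continuous_id).pow (n+1))).aestronglyMeasurable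
  have hsum : (∑' n : ℕ, ∫⁻ t, ‖(fun t : ℝ => t^n * (1-t)^(n+1)) t‖₊
      ∂(volume.restrict (Set.Ioc (0:ℝ) 1))) ≠ ⊤ := by
    have hb : ∀ n : ℕ, (∫⁻ t, ‖(fun t : ℝ => t^n * (1-t)^(n+1)) t‖₊
        ∂(volume.restrict (Set.Ioc (0:ℝ) 1))) ≤ (ENNReal.ofReal (1/4))^n := by
      intro n
      have : (∫⁻ t in Set.Ioc (0:ℝ) 1, ‖t^n * (1-t)^(n+1)‖₊)
          ≤ ∫⁻ t in Set.Ioc (0:ℝ) 1, (ENNReal.ofReal (1/4))^n := by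
        apply setLIntegral_mono measurable_const
        intro t ht
        have h0 : (0:ℝ) ≤ t := le_of_lt ht.1
        have h1 : t ≤ 1 := ht.2
        have hfnn : (0:ℝ) ≤ t^n * (1-t)^(n+1) :=
          mul_nonneg (pow_nonneg h0 _) (pow_nonneg (by linarith) _)
        have hle : t^n * (1-t)^(n+1) ≤ (1/4)^n := by
          have e : t^n * (1-t)^(n+1) = (t*(1-t))^n * (1-t) := by rw [mul_pow]; ring
          rw [e]
          have h14 : t*(1-t) ≤ 1/4 := by nlinarith [sq_nonneg (2*t-1)]
          have h14' : (t*(1-t))^n ≤ (1/4)^n := by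
            apply pow_le_pow_left₀ (by nlinarith) h14
          nlinarith [pow_nonneg (by nlinarith : (0:ℝ) ≤ t*(1-t)) n,
            pow_nonneg (by norm_num : (0:ℝ) ≤ (1/4:ℝ)) n]
        rw [← enorm_eq_nnnorm, ← ofReal_norm, Real.norm_of_nonneg hfnn,
          ← ENNReal.ofReal_pow (by norm_num : (0:ℝ) ≤ 1/4)]
        exact ENNReal.ofReal_le_ofReal hle
      refine le_trans this (le_of_eq ?_)
      rw [MeasureTheory.setLIntegral_const, Real.volume_Ioc]
      norm_num
    have : (∑' n : ℕ, (∫⁻ t, ‖(fun t : ℝ => t^n * (1-t)^(n+1)) t‖₊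
        ∂(volume.restrict (Set.Ioc (0:ℝ) 1)))) ≤ ∑' n : ℕ, (ENNReal.ofReal (1/4))^n :=
      ENNReal.tsum_le_tsum hb
    refine ne_top_of_le_ne_top ?_ this
    rw [ENNReal.tsum_geometric]
    have hlt : ENNReal.ofReal (1/4) < 1 := by
      rw [← ENNReal.ofReal_one]
      exact (ENNReal.ofReal_lt_ofReal_iff (by norm_num)).mpr (by norm_num)
    exact ENNReal.inv_ne_top.mpr (tsub_pos_of_lt hlt).ne'
  rw [← MeasureTheory.integral_tsum hmeas hsum]
  have hpt : ∀ t ∈ Set.Ioc (0:ℝ) 1, (∑' n : ℕ, t^n * (1-t)^(n+1))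
      = (1-t) * (1 - t*(1-t))⁻¹ := by
    intro t ht
    have h0 : (0:ℝ) < t := ht.1
    have h1 : t ≤ 1 := ht.2
    have hr0 : (0:ℝ) ≤ t*(1-t) := by nlinarith
    have hr1 : t*(1-t) < 1 := by nlinarith [sq_nonneg (2*t-1)]
    have e : ∀ n : ℕ, t^n * (1-t)^(n+1) = (1-t) * (t*(1-t))^n := by
      intro n; rw [mul_pow]; ring
    rw [tsum_congr e, tsum_mul_left, tsum_geometric_of_lt_one hr0 hr1]
  rw [MeasureTheory.setIntegral_congr_fun measurableSet_Ioc hpt,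
    ← intervalIntegral.integral_of_le (zero_le_one)]
  exact ftc_eval
end

section
/- The infinite sum of 1/((2i+1) * binom(2i, i)) for i from 1 to infinity equals 2π/(3√3) − 1. -/
open Real Finset MeasureTheory

noncomputable def gterm (n : ℕ) : ℝ := 1 / ((2*(n:ℝ)+1) * ((Nat.choose (2*n) n) : ℝ))

lemma fact_prod_aux (m k : ℕ) : m.factorial * ∏ j ∈ Finset.range k, (m+1+j) = (m+k).factorial := by
  induction k with
  | zero => simp
  | succ k ih =>
      rw [Finset.prod_range_succ, ← mul_assoc, ih,
        show m+(k+1) = (m+k)+1 by ring, Nat.factorial_succ]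
      ring

lemma beta_nat_s3 (n : ℕ) :
    (∫ x in (0:ℝ)..1, (x*(1-x))^n) = gterm n := by
  have hu : 0 < Complex.re ((n:ℂ)+1) := by simp; positivity
  have h2 := Complex.betaIntegral_eval_nat_add_one_right hu n
  have h1 : Complex.betaIntegral ((n:ℂ)+1) ((n:ℂ)+1)
      = ((∫ x in (0:ℝ)..1, (x*(1-x))^n : ℝ) : ℂ) := by
    rw [Complex.betaIntegral, ← intervalIntegral.integral_ofReal]
    apply intervalIntegral.integral_congr
    intro x _
    simp only [add_sub_cancel_right, Complex.cpow_natCast]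
    push_cast
    rw [← mul_pow]
    try ring
  have h3 : (∏ j ∈ Finset.range (n+1), ((n:ℂ) + 1 + j)) * (n.factorial : ℂ) = ((2*n+1).factorial : ℂ) := by
    have h4 : ((n.factorial : ℕ) : ℂ) * ∏ j ∈ Finset.range (n+1), ((n:ℂ)+1+(j:ℂ))
        = (((n+(n+1)).factorial : ℕ) : ℂ) := by
      exact_mod_cast fact_prod_aux n (n+1)
    rw [show 2*n+1 = n+(n+1) by omega, ← h4]
    ring
  rw [h1] at h2
  have hprodne : (∏ j ∈ Finset.range (n+1), ((n:ℂ) + 1 + j)) ≠ 0 := by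
    apply Finset.prod_ne_zero_iff.2
    intro j _
    have : (0:ℝ) < (n:ℝ) + 1 + j := by positivity
    intro h
    have := congrArg Complex.re h
    simp at this
    linarith
  have hfact : (((2*n+1).factorial : ℕ) : ℂ) ≠ 0 := by exact_mod_cast Nat.factorial_ne_zero _
  have hval : ((∫ x in (0:ℝ)..1, (x*(1-x))^n : ℝ) : ℂ)
      = ((n.factorial : ℕ) : ℂ) * ((n.factorial : ℕ) : ℂ) / (((2*n+1).factorial : ℕ) : ℂ) := by
    rw [h2, div_eq_div_iff hprodne hfact, ← h3]
    push_cast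
    ring
  have hvalR : (∫ x in (0:ℝ)..1, (x*(1-x))^n)
      = ((n.factorial : ℕ) : ℝ) * ((n.factorial : ℕ) : ℝ) / (((2*n+1).factorial : ℕ) : ℝ) := by
    have := hval
    rw [show ((n.factorial : ℕ) : ℂ) * ((n.factorial : ℕ) : ℂ) / (((2*n+1).factorial : ℕ) : ℂ)
      = ((((n.factorial : ℕ) : ℝ) * ((n.factorial : ℕ) : ℝ) / (((2*n+1).factorial : ℕ) : ℝ) : ℝ) : ℂ) by push_cast; ring] at this
    exact_mod_cast this
  rw [hvalR, gterm]
  have hkey : (Nat.choose (2*n) n) * (n.factorial * n.factorial) = (2*n).factorial := by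
    have := Nat.choose_mul_factorial_mul_factorial (show n ≤ 2*n by omega)
    rw [show 2*n - n = n by omega] at this
    rw [← this]; ring
  have hfs : ((2*n+1).factorial : ℕ) = (2*n+1) * (2*n).factorial := Nat.factorial_succ _
  have hc : (0:ℝ) < (Nat.choose (2*n) n : ℝ) := by
    exact_mod_cast Nat.choose_pos (show n ≤ 2*n by omega)
  have hfpos : (0:ℝ) < (((2*n+1).factorial : ℕ) : ℝ) := by exact_mod_cast Nat.factorial_pos _
  rw [div_eq_div_iff hfpos.ne' (by positivity)]
  rw [hfs]
  have : (((Nat.choose (2*n) n) : ℝ) * ((n.factorial:ℕ):ℝ) * ((n.factorial:ℕ):ℝ)) = (((2*n).factorial : ℕ) : ℝ) := by exact_mod_cast hkey.symm ▸ (by push_cast; ring : (((Nat.choose (2*n) n) * (n.factorial * n.factorial) : ℕ) : ℝ) = ((Nat.choose (2*n) n : ℝ)) * ((n.factorial:ℕ):ℝ) * ((n.factorial:ℕ):ℝ)).symm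
  push_cast at this ⊢
  nlinarith [this]

lemma gterm_nonneg (n : ℕ) : 0 ≤ gterm n := by
  unfold gterm; positivity

lemma gterm_le (n : ℕ) : gterm n ≤ (1/4)^n := by
  have h4 : (4:ℕ)^n ≤ (2*n+1) * Nat.choose (2*n) n := by
    rcases Nat.eq_zero_or_pos n with h | h
    · simp [h]
    · calc (4:ℕ)^n ≤ 2*n * Nat.centralBinom n :=
            Nat.four_pow_le_two_mul_self_mul_centralBinom n h
        _ ≤ (2*n+1) * Nat.choose (2*n) n := by
            rw [Nat.centralBinom_eq_two_mul_choose]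
            exact Nat.mul_le_mul (by omega) le_rfl
  have h4R : (4:ℝ)^n ≤ (2*(n:ℝ)+1) * (Nat.choose (2*n) n : ℝ) := by
    exact_mod_cast h4
  have hpos : (0:ℝ) < (2*(n:ℝ)+1) * (Nat.choose (2*n) n : ℝ) := by
    have : (0:ℝ) < (Nat.choose (2*n) n : ℝ) := by
      exact_mod_cast Nat.choose_pos (show n ≤ 2*n by omega)
    positivity
  rw [gterm, div_pow, one_pow, one_div, one_div]
  exact inv_anti₀ (by positivity) h4R

lemma summable_gterm : Summable gterm :=
  Summable.of_nonneg_of_le gterm_nonneg gterm_le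
    (summable_geometric_of_lt_one (by norm_num) (by norm_num))

lemma hasSum_gterm : HasSum gterm (2 * Real.pi / (3 * Real.sqrt 3)) := by
  set μ := volume.restrict (Set.Ioc (0:ℝ) 1) with hμ
  have hcont : ∀ n : ℕ, Continuous (fun x : ℝ => (x*(1-x))^n) := by
    intro n; fun_prop
  have hInt : ∀ n : ℕ, Integrable (fun x : ℝ => (x*(1-x))^n) μ := by
    intro n
    rw [hμ]
    exact (hcont n).integrableOn_Ioc
  have hIval : ∀ n : ℕ, (∫ x, (x*(1-x))^n ∂μ) = gterm n := by
    intro n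
    rw [hμ, ← intervalIntegral.integral_of_le (by norm_num : (0:ℝ) ≤ 1)]
    exact beta_nat_s3 n
  have hnormval : ∀ n : ℕ, (∫ x, ‖(x*(1-x))^n‖ ∂μ) = gterm n := by
    intro n
    rw [← hIval n, hμ]
    apply setIntegral_congr_fun measurableSet_Ioc
    intro x hx
    apply Real.norm_of_nonneg
    have h1 : 0 < x := hx.1
    have h2 : x ≤ 1 := hx.2
    have : 0 ≤ x * (1-x) := mul_nonneg h1.le (by linarith)
    positivity
  have hsumnorm : Summable fun n : ℕ => ∫ x, ‖(x*(1-x))^n‖ ∂μ := by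
    simp_rw [hnormval]; exact summable_gterm
  have hs := MeasureTheory.hasSum_integral_of_summable_integral_norm
    (F := fun (n : ℕ) (x : ℝ) => (x*(1-x))^n) (μ := μ) hInt hsumnorm
  simp_rw [hIval] at hs
  have htsum : (∫ x, (∑' n : ℕ, (x*(1-x))^n) ∂μ) = 2 * Real.pi / (3 * Real.sqrt 3) := by
    have hcongr : (∫ x, (∑' n : ℕ, (x*(1-x))^n) ∂μ)
        = ∫ x in Set.Ioc (0:ℝ) 1, (1 - x*(1-x))⁻¹ := by
      rw [hμ]
      apply setIntegral_congr_fun measurableSet_Ioc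
      intro x hx
      have h1 : 0 < x := hx.1
      have h2 : x ≤ 1 := hx.2
      have hr0 : 0 ≤ x*(1-x) := mul_nonneg h1.le (by linarith)
      have hr1 : x*(1-x) < 1 := by nlinarith [sq_nonneg (x - 1/2)]
      exact tsum_geometric_of_lt_one hr0 hr1
    rw [hcongr, ← intervalIntegral.integral_of_le (by norm_num : (0:ℝ) ≤ 1)]
    -- FTC
    have hc : (0:ℝ) < Real.sqrt 3 := Real.sqrt_pos.2 (by norm_num)
    have hc2 : Real.sqrt 3 ^ 2 = 3 := Real.sq_sqrt (by norm_num)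
    set c := Real.sqrt 3 with hcdef
    have hden : ∀ x : ℝ, (0:ℝ) < 1 - x*(1-x) := by
      intro x; nlinarith [sq_nonneg (x - 1/2)]
    have hderiv : ∀ x ∈ Set.uIcc (0:ℝ) 1,
        HasDerivAt (fun y : ℝ => 2/c * Real.arctan ((2*y-1)/c)) ((1 - x*(1-x))⁻¹) x := by
      intro x _
      have h1 : HasDerivAt (fun y : ℝ => (2*y-1)/c) (2/c) x := by
        have : HasDerivAt (fun y : ℝ => 2*y-1) 2 x := by
          simpa using ((hasDerivAt_id x).const_mul 2).sub_const 1
        simpa [div_eq_mul_inv] using this.mul_const c⁻¹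
      have h2 : HasDerivAt (fun y : ℝ => Real.arctan ((2*y-1)/c))
          ((1 + ((2*x-1)/c)^2)⁻¹ * (2/c)) x := by
        have := (Real.hasDerivAt_arctan ((2*x-1)/c)).comp x h1
        rw [one_div] at this
        exact this
      have h3 : HasDerivAt (fun y : ℝ => 2/c * Real.arctan ((2*y-1)/c))
          (2/c * ((1 + ((2*x-1)/c)^2)⁻¹ * (2/c))) x := h2.const_mul (2/c)
      convert h3 using 1
      have e1 : 1 + ((2*x-1)/c)^2 = (c^2 + (2*x-1)^2)/c^2 := by field_simp
      rw [e1]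
      have e2 : 2/c * (((c^2 + (2*x-1)^2)/c^2)⁻¹ * (2/c)) = 4/(c^2+(2*x-1)^2) := by
        have hA : (0:ℝ) < c^2 + (2*x-1)^2 := by positivity
        rw [inv_div]
        field_simp
        ring
      rw [e2, hc2, show (3:ℝ) + (2*x-1)^2 = 4 * (1 - x*(1-x)) by ring]
      rw [eq_div_iff (by have := hden x; positivity : (4:ℝ) * (1 - x*(1-x)) ≠ 0)]
      field_simp [(hden x).ne']
    have hint : IntervalIntegrable (fun x : ℝ => (1 - x*(1-x))⁻¹) volume 0 1 := by
      apply Continuous.intervalIntegrable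
      apply Continuous.inv₀ (by fun_prop)
      intro x; exact ne_of_gt (hden x)
    rw [intervalIntegral.integral_eq_sub_of_hasDerivAt hderiv hint]
    have harc : Real.arctan (1/c) = Real.pi/6 := by
      rw [hcdef, ← Real.tan_pi_div_six, Real.arctan_tan]
      · linarith [Real.pi_pos]
      · linarith [Real.pi_pos]
    have h0 : (2*(0:ℝ)-1)/c = -(1/c) := by ring
    have h1 : (2*(1:ℝ)-1)/c = 1/c := by ring
    rw [h0, h1, Real.arctan_neg, harc]
    field_simp
    ring
  rw [← htsum]
  exact hs

theorem stmt_3 : (∑' i : ℕ, (1:ℝ) / ((2*((i:ℝ)+1)+1) * ((Nat.choose (2*(i+1)) (i+1)) : ℝ))) = 2 * Real.pi / (3 * Real.sqrt 3) - 1 := by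
  have h1 : (∑' i : ℕ, (1:ℝ) / ((2*((i:ℝ)+1)+1) * ((Nat.choose (2*(i+1)) (i+1)) : ℝ)))
      = ∑' i : ℕ, gterm (i+1) := by
    apply tsum_congr
    intro i
    rw [gterm]
    push_cast
    ring_nf
  have h2 : (∑' n : ℕ, gterm n) = gterm 0 + ∑' i : ℕ, gterm (i+1) :=
    Summable.tsum_eq_zero_add summable_gterm
  have h3 : gterm 0 = 1 := by simp [gterm]
  rw [h1]
  have := hasSum_gterm.tsum_eq
  rw [h2, h3] at this
  linarith
end

section
/- The infinite sum of binom(2i, i)/(16^i * i) for i from 1 to infinity equals 4·log(2) − 2·log(2 + √3). -/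
open Real Finset Set

noncomputable def aa (n : ℕ) : ℝ := (Nat.centralBinom n : ℝ)

lemma aa_nonneg (n : ℕ) : 0 ≤ aa n := by unfold aa; positivity

lemma aa_le (n : ℕ) : aa n ≤ 4 ^ n := by
  unfold aa
  induction n with
  | zero => simp [Nat.centralBinom]
  | succ n ih =>
    have h : (Nat.centralBinom (n+1) : ℝ) ≤ 4 * Nat.centralBinom n := by
      have := Nat.succ_mul_centralBinom_succ n
      have h' : ((n:ℝ)+1) * Nat.centralBinom (n+1) = 2*(2*n+1) * Nat.centralBinom n := by
        exact_mod_cast congrArg (fun k : ℕ => (k : ℝ)) this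
      have hn : (0:ℝ) < (n:ℝ)+1 := by positivity
      rw [← mul_le_mul_iff_right₀ hn, h']
      have : (0:ℝ) ≤ (Nat.centralBinom n : ℝ) := by positivity
      nlinarith
    calc (Nat.centralBinom (n+1) : ℝ) ≤ 4 * Nat.centralBinom n := h
    _ ≤ 4 * 4 ^ n := by linarith
    _ = 4 ^ (n+1) := by ring

-- summable bounds
lemma sum_u1 : Summable (fun n : ℕ => (8:ℝ) * n * (1/2)^n) := by
  have := summable_pow_mul_geometric_of_norm_lt_one (R := ℝ) 1 (r := 1/2) (by norm_num)
  have h := this.mul_left 8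
  apply h.congr
  intro n
  simp [pow_one]
  ring

lemma sum_u2 : Summable (fun n : ℕ => (4:ℝ) * (1/2)^n) :=
  (summable_geometric_of_lt_one (by norm_num) (by norm_num)).mul_left 4

lemma bound1 {y : ℝ} (hy : |y| ≤ 1/8) (n : ℕ) :
    ‖(n:ℝ) * aa n * y^(n-1)‖ ≤ 8 * n * (1/2)^n := by
  rw [norm_mul, norm_mul, norm_pow]
  have h1 : ‖(n:ℝ)‖ = (n:ℝ) := by simp
  have h2 : ‖aa n‖ = aa n := by rw [Real.norm_eq_abs, abs_of_nonneg (aa_nonneg n)]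
  rw [h1, h2, Real.norm_eq_abs]
  cases n with
  | zero => simp
  | succ m =>
    have key : (m+1:ℝ) * aa (m+1) * |y|^m ≤ (m+1) * 4^(m+1) * (1/8)^m := by
      have := aa_le (m+1)
      have h3 : |y|^m ≤ (1/8)^m := pow_le_pow_left₀ (abs_nonneg y) hy m
      have := aa_nonneg (m+1)
      have : (0:ℝ) ≤ |y|^m := by positivity
      gcongr
      all_goals first
      | exact aa_le (m+1)
      | exact hy
    have heq : ((m:ℝ)+1) * 4^(m+1) * (1/8)^m = 8 * ((m:ℝ)+1) * (1/2)^(m+1) := by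
      have h8 : ((1:ℝ)/8)^m = (1/2)^m * (1/4)^m := by
        rw [← mul_pow]; norm_num
      have h4 : ((1:ℝ)/4)^m * 4^(m+1) = 4 := by
        rw [pow_succ, ← mul_assoc, ← mul_pow]; norm_num
      calc ((m:ℝ)+1) * 4^(m+1) * (1/8)^m = ((m:ℝ)+1) * ((1/4)^m * 4^(m+1)) * (1/2)^m := by rw [h8]; ring
      _ = ((m:ℝ)+1) * 4 * (1/2)^m := by rw [h4]
      _ = 8 * ((m:ℝ)+1) * (1/2)^(m+1) := by rw [pow_succ]; ring
    have hsub : m + 1 - 1 = m := rfl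
    rw [hsub]
    push_cast
    calc ((m:ℝ)+1) * aa (m+1) * |y|^m ≤ ((m:ℝ)+1) * 4^(m+1) * (1/8)^m := key
    _ = 8 * ((m:ℝ)+1) * (1/2)^(m+1) := heq

lemma bound2 {y : ℝ} (hy : |y| ≤ 1/8) (n : ℕ) :
    ‖aa (n+1) * y^n‖ ≤ 4 * (1/2)^n := by
  rw [norm_mul, norm_pow, Real.norm_eq_abs, abs_of_nonneg (aa_nonneg _), Real.norm_eq_abs]
  have key : aa (n+1) * |y|^n ≤ 4^(n+1) * (1/8)^n := by
    gcongr
    all_goals first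
    | exact aa_le (n+1)
    | exact hy
    | exact abs_nonneg y
  refine key.trans_eq ?_
  rw [pow_succ]
  rw [show ((1:ℝ)/8) = (1/2) * (1/4) by norm_num, mul_pow, ← mul_assoc]
  have h41 : (4:ℝ)^n * (1/4)^n = 1 := by rw [← mul_pow]; norm_num
  calc (4:ℝ)^n * 4 * (1/2)^n * (1/4)^n = 4 * (((4:ℝ)^n * (1/4)^n) * (1/2)^n) := by ring
  _ = 4 * (1/2)^n := by rw [h41, one_mul]

lemma bound0 {y : ℝ} (hy : |y| ≤ 1/8) (n : ℕ) :
    ‖aa n * y^n‖ ≤ (1/2)^n := by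
  rw [norm_mul, norm_pow, Real.norm_eq_abs, abs_of_nonneg (aa_nonneg _), Real.norm_eq_abs]
  have key : aa n * |y|^n ≤ 4^n * (1/8)^n := by
    gcongr
    all_goals first
    | exact aa_le n
    | exact hy
    | exact abs_nonneg y
  refine key.trans_eq ?_
  rw [← mul_pow]; norm_num

lemma summable0 {y : ℝ} (hy : |y| ≤ 1/8) : Summable (fun n : ℕ => aa n * y^n) :=
  Summable.of_norm_bounded (summable_geometric_of_lt_one (by norm_num) (by norm_num)) (bound0 hy)

lemma summable1 {y : ℝ} (hy : |y| ≤ 1/8) : Summable (fun n : ℕ => (n:ℝ) * aa n * y^(n-1)) :=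
  Summable.of_norm_bounded sum_u1 (bound1 hy)

lemma summable2 {y : ℝ} (hy : |y| ≤ 1/8) : Summable (fun n : ℕ => aa (n+1) * y^n) :=
  Summable.of_norm_bounded sum_u2 (bound2 hy)

noncomputable def GG (x : ℝ) : ℝ := ∑' n : ℕ, aa n * x^n

lemma mem_ball_abs {y : ℝ} (hy : y ∈ Ioo (-(1/8):ℝ) (1/8)) : |y| ≤ 1/8 := by
  rw [abs_le]; exact ⟨hy.1.le, hy.2.le⟩

lemma hasDerivAt_GG {x : ℝ} (hx : x ∈ Ioo (-(1/8):ℝ) (1/8)) :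
    HasDerivAt GG (∑' n : ℕ, (n:ℝ) * aa n * x^(n-1)) x := by
  apply hasDerivAt_tsum_of_isPreconnected (u := fun n : ℕ => (8:ℝ) * n * (1/2)^n)
    (g := fun n y => aa n * y^n) (g' := fun n y => (n:ℝ) * aa n * y^(n-1)) (y₀ := 0)
    sum_u1 isOpen_Ioo (convex_Ioo _ _).isPreconnected
  · intro n y _
    have := (hasDerivAt_pow n y).const_mul (aa n)
    refine this.congr_deriv (Eq.symm ?_)
    ring
  · intro n y hy
    exact bound1 (mem_ball_abs hy) n
  · constructor <;> norm_num
  · exact summable0 (by norm_num)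
  · exact hx

lemma aa_rec (n : ℕ) : ((n:ℝ)+1) * aa (n+1) = (4*n+2) * aa n := by
  have h := congrArg (fun k : ℕ => (k : ℝ)) (Nat.succ_mul_centralBinom_succ n)
  push_cast at h
  unfold aa
  push_cast
  linarith

-- summable of n * aa n * x^n (no shift)
lemma summable1' {y : ℝ} (hy : |y| ≤ 1/8) : Summable (fun n : ℕ => (n:ℝ) * aa n * y^n) := by
  apply Summable.of_norm_bounded sum_u1
  intro n
  have := bound1 hy n
  rcases Nat.eq_zero_or_pos n with h | h
  · subst h; simp
  · refine le_trans ?_ this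
    rw [norm_mul, norm_mul, norm_pow, norm_mul, norm_mul, norm_pow]
    gcongr _ * _ * ?_
    exact pow_le_pow_of_le_one (norm_nonneg y)
      (by rw [Real.norm_eq_abs]; linarith [(abs_le.mp hy).2]) (Nat.sub_le n 1)

lemma ode_GG {x : ℝ} (hx : x ∈ Ioo (-(1/8):ℝ) (1/8)) :
    (1 - 4*x) * (∑' n : ℕ, (n:ℝ) * aa n * x^(n-1)) = 2 * GG x := by
  have habs := mem_ball_abs hx
  set D := ∑' n : ℕ, (n:ℝ) * aa n * x^(n-1) with hD
  have hsum1 := summable1 habs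
  have hsum1' := summable1' habs
  have hsum0 := summable0 habs
  -- D = ∑ (n+1) aa(n+1) x^n
  have h1 : D = ∑' n : ℕ, ((n:ℝ)+1) * aa (n+1) * x^n := by
    rw [hD, Summable.tsum_eq_zero_add hsum1]
    simp only [Nat.cast_zero, zero_mul, zero_add, Nat.add_sub_cancel]
    congr 1
    funext n
    push_cast
    ring
  -- термwise recurrence
  have h2 : D = ∑' n : ℕ, (4 * ((n:ℝ) * aa n * x^n) + 2 * (aa n * x^n)) := by
    rw [h1]
    congr 1
    funext n
    rw [aa_rec n]
    ring
  have h3 : D = 4 * (∑' n : ℕ, (n:ℝ) * aa n * x^n) + 2 * GG x := by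
    rw [h2, Summable.tsum_add (hsum1'.mul_left 4) (hsum0.mul_left 2),
      tsum_mul_left, tsum_mul_left]
    rfl
  -- ∑ n aa n x^n = x * D
  have h4 : (∑' n : ℕ, (n:ℝ) * aa n * x^n) = x * D := by
    rw [hD, ← tsum_mul_left]
    congr 1
    funext n
    cases n with
    | zero => simp
    | succ m =>
      simp only [Nat.add_sub_cancel]
      rw [pow_succ]
      ring
  rw [h4] at h3
  linarith

lemma GG_zero : GG 0 = 1 := by
  unfold GG
  rw [tsum_eq_single 0]
  · simp [aa, Nat.centralBinom]
  · intro n hn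
    simp [zero_pow hn]

lemma sqrt_pos' {x : ℝ} (hx : x ∈ Ioo (-(1/8):ℝ) (1/8)) : 0 < 1 - 4*x := by
  have := hx.2; linarith

lemma hasDerivAt_sqq {x : ℝ} (hx : x ∈ Ioo (-(1/8):ℝ) (1/8)) :
    HasDerivAt (fun y => Real.sqrt (1 - 4*y)) (-2 / Real.sqrt (1 - 4*x)) x := by
  have hpos := sqrt_pos' hx
  have hinner : HasDerivAt (fun y : ℝ => 1 - 4*y) (-4) x := by
    simpa using ((hasDerivAt_id x).const_mul (4:ℝ)).const_sub 1
  have := (Real.hasDerivAt_sqrt hpos.ne').comp x hinner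
  refine this.congr_deriv (Eq.symm ?_)
  field_simp
  ring

lemma GG_eq {x : ℝ} (hx : x ∈ Icc (0:ℝ) (7/100)) :
    GG x = 1 / Real.sqrt (1 - 4*x) := by
  have hsub : Icc (0:ℝ) (7/100) ⊆ Ioo (-(1/8):ℝ) (1/8) := by
    intro y hy
    constructor <;> [linarith [hy.1]; linarith [hy.2]]
  set phi := fun y => Real.sqrt (1 - 4*y) * GG y with hphi
  have hderiv : ∀ y ∈ Ioo (-(1/8):ℝ) (1/8), HasDerivAt phi 0 y := by
    intro y hy
    have hpos := sqrt_pos' hy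
    have hs : Real.sqrt (1 - 4*y) > 0 := Real.sqrt_pos.mpr hpos
    have hD := hasDerivAt_GG hy
    have hQ := hasDerivAt_sqq hy
    have := hQ.mul hD
    refine this.congr_deriv (Eq.symm ?_)
    have hsq : Real.sqrt (1 - 4*y) ^ 2 = 1 - 4*y := Real.sq_sqrt hpos.le
    have hode := ode_GG hy
    field_simp
    linear_combination (-1:ℝ) * hode + (-(∑' n : ℕ, (n:ℝ) * aa n * y ^ (n-1))) * hsq
  have hconst : ∀ y ∈ Icc (0:ℝ) (7/100), phi y = phi 0 := by
    intro y hy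
    apply constant_of_has_deriv_right_zero
      (f := phi) (a := 0) (b := 7/100)
    · intro z hz
      exact ((hderiv z (hsub hz)).continuousAt).continuousWithinAt
    · intro z hz
      exact (hderiv z (hsub ⟨hz.1, hz.2.le⟩)).hasDerivWithinAt
    · exact hy
  have h0 : phi 0 = 1 := by
    simp only [hphi]
    rw [GG_zero]
    norm_num
  have hx' := hsub hx
  have hs : Real.sqrt (1 - 4*x) > 0 := Real.sqrt_pos.mpr (sqrt_pos' hx')
  have hthis := hconst x hx
  rw [h0] at hthis
  simp only [hphi] at hthis
  field_simp
  linarith [hthis]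

noncomputable def FF (x : ℝ) : ℝ := ∑' n : ℕ, aa (n+1) * x^(n+1) / ((n:ℝ)+1)

lemma hasDerivAt_FF {x : ℝ} (hx : x ∈ Ioo (-(1/8):ℝ) (1/8)) :
    HasDerivAt FF (∑' n : ℕ, aa (n+1) * x^n) x := by
  apply hasDerivAt_tsum_of_isPreconnected (u := fun n : ℕ => (4:ℝ) * (1/2)^n)
    (g := fun n y => aa (n+1) * y^(n+1) / ((n:ℝ)+1)) (g' := fun n y => aa (n+1) * y^n) (y₀ := 0)
    sum_u2 isOpen_Ioo (convex_Ioo _ _).isPreconnected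
  · intro n y _
    have h := ((hasDerivAt_pow (n+1) y).const_mul (aa (n+1))).div_const ((n:ℝ)+1)
    refine h.congr_deriv (Eq.symm ?_)
    have : ((n:ℝ)+1) ≠ 0 := by positivity
    field_simp
    push_cast
    ring
  · intro n y hy
    exact bound2 (mem_ball_abs hy) n
  · constructor <;> norm_num
  · apply Summable.congr (f := fun _ : ℕ => (0:ℝ)) summable_zero
    intro n
    simp
  · exact hx

lemma BB_eq {x : ℝ} (hx : x ∈ Ico (0:ℝ) (1/16)) :
    (∑' n : ℕ, aa (n+1) * x^n)
      = 4 / (Real.sqrt (1-4*x) * (1 + Real.sqrt (1-4*x))) := by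
  have hx8 : |x| ≤ 1/8 := by rw [abs_le]; constructor <;> [linarith [hx.1]; linarith [hx.2]]
  rcases eq_or_lt_of_le hx.1 with h0 | h0
  · subst h0
    rw [tsum_eq_single 0]
    · norm_num [aa, Nat.centralBinom]
    · intro n hn; simp [zero_pow hn]
  · have hIcc : x ∈ Icc (0:ℝ) (7/100) := ⟨hx.1, by linarith [hx.2]⟩
    have hG := GG_eq hIcc
    set s := Real.sqrt (1-4*x) with hs
    have hpos : (0:ℝ) < 1 - 4*x := by linarith [hx.2]
    have hspos : 0 < s := Real.sqrt_pos.mpr hpos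
    have hsq : s^2 = 1 - 4*x := Real.sq_sqrt hpos.le
    have hxB : x * (∑' n : ℕ, aa (n+1) * x^n) = GG x - 1 := by
      rw [← tsum_mul_left]
      have h1 : (fun n : ℕ => x * (aa (n+1) * x^n)) = fun n : ℕ => aa (n+1) * x^(n+1) := by
        funext n; rw [pow_succ]; ring
      rw [h1]
      have h2 := Summable.tsum_eq_zero_add (summable0 hx8)
      unfold GG
      rw [h2]
      simp [aa, Nat.centralBinom]
    rw [hG] at hxB
    set B := ∑' n : ℕ, aa (n+1) * x^n with hB
    have h1s : 0 < 1 + s := by linarith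
    rw [eq_div_iff (by positivity)]
    have hxne : x ≠ 0 := ne_of_gt h0
    have key : x * (B * (s * (1+s))) = x * 4 := by
      have : x * B * s = 1 - s := by
        field_simp at hxB
        linarith [hxB]
      nlinarith [this, hsq]
    have := mul_left_cancel₀ hxne key
    linarith [this]

lemma hasDerivAt_LL {x : ℝ} (hx : x ∈ Ioo (-(1/8):ℝ) (1/8)) :
    HasDerivAt (fun y => 2 * Real.log ((1 + Real.sqrt (1-4*y))/2))
      (-4 / (Real.sqrt (1-4*x) * (1 + Real.sqrt (1-4*x)))) x := by
  have hpos := sqrt_pos' hx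
  have hspos : 0 < Real.sqrt (1-4*x) := Real.sqrt_pos.mpr hpos
  have hinner : HasDerivAt (fun y => (1 + Real.sqrt (1-4*y))/2) (-1 / Real.sqrt (1-4*x)) x := by
    have := ((hasDerivAt_sqq hx).const_add 1).div_const 2
    refine this.congr_deriv (Eq.symm ?_)
    field_simp
  have hne : ((1 + Real.sqrt (1-4*x))/2) ≠ 0 := by positivity
  have := (hinner.log hne).const_mul (2:ℝ)
  refine this.congr_deriv (Eq.symm ?_)
  field_simp
  ring

lemma FF_val : FF (1/16) = -(2 * Real.log ((1 + Real.sqrt (1 - 4*(1/16)))/2)) := by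
  set H := fun y => FF y + 2 * Real.log ((1 + Real.sqrt (1-4*y))/2) with hH
  have hsub : Icc (0:ℝ) (1/16) ⊆ Ioo (-(1/8):ℝ) (1/8) := by
    intro y hy
    constructor <;> [linarith [hy.1]; linarith [hy.2]]
  have hderiv : ∀ y ∈ Ico (0:ℝ) (1/16), HasDerivAt H 0 y := by
    intro y hy
    have hy' : y ∈ Ioo (-(1/8):ℝ) (1/8) := hsub ⟨hy.1, hy.2.le⟩
    have h1 := hasDerivAt_FF hy'
    have h2 := hasDerivAt_LL hy'
    have := h1.add h2
    refine this.congr_deriv (Eq.symm ?_)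
    rw [BB_eq hy]
    ring
  have hcont : ContinuousOn H (Icc (0:ℝ) (1/16)) := by
    intro z hz
    have hz' := hsub hz
    exact (((hasDerivAt_FF hz').add (hasDerivAt_LL hz')).continuousAt).continuousWithinAt
  have hconst := constant_of_has_deriv_right_zero hcont
    (fun y hy => (hderiv y hy).hasDerivWithinAt)
  have h116 := hconst (1/16) ⟨by norm_num, le_refl _⟩
  have hF0 : FF 0 = 0 := by
    unfold FF
    rw [tsum_eq_single 0]
    · norm_num
    · intro n hn
      simp [zero_pow (by omega : n + 1 ≠ 0)]
  have hH0 : H 0 = 0 := by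
    simp only [hH, hF0]
    norm_num
  rw [hH0] at h116
  simp only [hH] at h116
  linarith [h116]

lemma sqrt_34 : Real.sqrt (1 - 4*((1:ℝ)/16)) = Real.sqrt 3 / 2 := by
  have : (1:ℝ) - 4*(1/16) = 3/4 := by norm_num
  rw [this]
  rw [Real.sqrt_div (by norm_num : (0:ℝ) ≤ 3) 4]
  rw [show (4:ℝ) = 2^2 by norm_num, Real.sqrt_sq (by norm_num : (0:ℝ) ≤ 2)]

theorem stmt_4 : (∑' i : ℕ, ((Nat.choose (2*(i+1)) (i+1)) : ℝ) / ((16:ℝ)^(i+1) * ((i:ℝ)+1))) = 4 * Real.log 2 - 2 * Real.log (2 + Real.sqrt 3) := by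
  have heq : (∑' i : ℕ, ((Nat.choose (2*(i+1)) (i+1)) : ℝ) / ((16:ℝ)^(i+1) * ((i:ℝ)+1))) = FF (1/16) := by
    unfold FF
    congr 1
    funext i
    have h16 : ((16:ℝ)^(i+1)) ≠ 0 := by positivity
    have hi : ((i:ℝ)+1) ≠ 0 := by positivity
    rw [show aa (i+1) = ((Nat.choose (2*(i+1)) (i+1)) : ℝ) by rw [aa, Nat.centralBinom]]
    rw [div_pow]
    field_simp
    ring
  rw [heq, FF_val, sqrt_34]
  have h3 : (0:ℝ) < Real.sqrt 3 := Real.sqrt_pos.mpr (by norm_num)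
  have hform : (1 + Real.sqrt 3 / 2)/2 = (2 + Real.sqrt 3)/4 := by ring
  rw [hform, Real.log_div (by positivity) (by norm_num)]
  rw [show (4:ℝ) = 2^2 by norm_num, Real.log_pow]
  push_cast
  ring
end

section
/- The infinite sum of binom(2i, i)/(16^i · (2i+1)) for i from 1 to infinity equals π/3 − 1. -/
open Real Finset

noncomputable def bb (n : ℕ) : ℝ := (Nat.choose (2*n) n : ℝ) / 4^n

lemma bb_nonneg (n : ℕ) : 0 ≤ bb n := by unfold bb; positivity

lemma choose_le_four_pow (n : ℕ) : Nat.choose (2*n) n ≤ 4^n := by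
  calc Nat.choose (2*n) n ≤ ∑ i ∈ range (2*n+1), Nat.choose (2*n) i :=
        Finset.single_le_sum (fun i _ => Nat.zero_le _) (by simp; omega)
    _ = 2^(2*n) := Nat.sum_range_choose _
    _ = 4^n := by rw [pow_mul]; norm_num

lemma bb_le_one (n : ℕ) : bb n ≤ 1 := by
  rw [bb, div_le_one (by positivity)]
  exact_mod_cast (by exact_mod_cast choose_le_four_pow n : ((Nat.choose (2*n) n : ℝ)) ≤ (4:ℝ)^n)

lemma bb_rec (n : ℕ) : (2*(n:ℝ)+2) * bb (n+1) = (2*n+1) * bb n := by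
  have h := Nat.succ_mul_centralBinom_succ n
  rw [Nat.centralBinom_eq_two_mul_choose, Nat.centralBinom_eq_two_mul_choose] at h
  have h' : ((n+1) * Nat.choose (2*(n+1)) (n+1) : ℝ) = (2 * (2*n+1) * Nat.choose (2*n) n : ℝ) := by
    exact_mod_cast congrArg (Nat.cast : ℕ → ℝ) h
  rw [bb, bb]
  push_cast at h' ⊢
  rw [pow_succ]
  have h4 : (4:ℝ)^n ≠ 0 := by positivity
  field_simp
  linear_combination (2:ℝ) * h'

noncomputable def gg : ℝ → ℝ := fun x => ∑' n, bb n * x^(2*n)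

lemma abs916 : ‖(9/16:ℝ)‖ < 1 := by
  rw [Real.norm_eq_abs, abs_of_nonneg (by norm_num)]; norm_num

lemma summable_u : Summable (fun n : ℕ => (8/3)*((n:ℝ)*(9/16)^n)) := by
  have := summable_pow_mul_geometric_of_norm_lt_one (R := ℝ) 1 abs916
  simpa using this.mul_left (8/3)

lemma deriv_bound {x : ℝ} (hx : |x| ≤ 3/4) (n : ℕ) :
    ‖bb n * (2*(n:ℝ) * x^(2*n-1))‖ ≤ (8/3)*((n:ℝ)*(9/16)^n) := by
  rcases n with _ | m
  · simp
  · rw [norm_mul, norm_mul, norm_pow, Real.norm_of_nonneg (bb_nonneg _),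
      Real.norm_of_nonneg (by positivity : (0:ℝ) ≤ 2*((m+1:ℕ):ℝ)), Real.norm_eq_abs]
    have h2 : |x| ^ (2*(m+1)-1) ≤ (3/4:ℝ)^(2*(m+1)-1) :=
      pow_le_pow_left₀ (abs_nonneg x) hx _
    have e1 : (2*(m+1)-1) = 2*m+1 := by omega
    rw [e1] at h2 ⊢
    have e2 : ((3:ℝ)/4)^(2*m+1) = (3/4) * (9/16)^m := by
      rw [pow_succ', pow_mul]; norm_num
    calc bb (m+1) * (2*((m+1:ℕ):ℝ) * |x|^(2*m+1))
        ≤ 1 * (2*((m+1:ℕ):ℝ) * (3/4:ℝ)^(2*m+1)) := by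
          apply mul_le_mul (bb_le_one _) (mul_le_mul_of_nonneg_left h2 (by positivity))
            (by positivity) zero_le_one
      _ = (8/3)*(((m+1:ℕ):ℝ)*(9/16)^(m+1)) := by
          rw [e2, pow_succ' (9/16:ℝ) m]; push_cast; ring

lemma summable_G {x : ℝ} (hx : |x| ≤ 3/4) : Summable (fun n : ℕ => bb n * x^(2*n)) := by
  apply Summable.of_norm_bounded (summable_geometric_of_norm_lt_one abs916)
  intro n
  rw [norm_mul, norm_pow]
  calc ‖bb n‖ * ‖x‖^(2*n) ≤ 1 * (3/4:ℝ)^(2*n) := by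
        apply mul_le_mul _ (pow_le_pow_left₀ (norm_nonneg x) (by rwa [Real.norm_eq_abs]) _)
          (by positivity) zero_le_one
        rw [Real.norm_of_nonneg (bb_nonneg _)]; exact bb_le_one _
    _ = (9/16:ℝ)^n := by rw [one_mul, pow_mul]; norm_num

lemma gg_hasDerivAt {x : ℝ} (hx : x ∈ Set.Ioo (-(3/4):ℝ) (3/4)) :
    HasDerivAt gg (∑' n, bb n * (2*(n:ℝ) * x^(2*n-1))) x := by
  have h0 : (0:ℝ) ∈ Set.Ioo (-(3/4):ℝ) (3/4) := by norm_num
  exact hasDerivAt_tsum_of_isPreconnected (u := fun n:ℕ => (8/3)*((n:ℝ)*(9/16)^n))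
    (g' := fun (n:ℕ) (y:ℝ) => bb n * (2*(n:ℝ) * y^(2*n-1)))
    summable_u isOpen_Ioo (convex_Ioo _ _).isPreconnected
    (fun n y _ => by simpa using (hasDerivAt_pow (2*n) y).const_mul (bb n))
    (fun n y hy => deriv_bound (by rw [abs_le]; exact ⟨hy.1.le, hy.2.le⟩) n)
    h0 (summable_G (by norm_num)) hx

lemma key {x : ℝ} (hx : |x| ≤ 3/4) :
    (1 - x^2) * (∑' n, bb n * (2*(n:ℝ) * x^(2*n-1))) = x * gg x := by
  have hA : Summable (fun n : ℕ => bb n * (2*(n:ℝ) * x^(2*n-1))) :=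
    Summable.of_norm_bounded summable_u (deriv_bound hx)
  set D := ∑' n, bb n * (2*(n:ℝ) * x^(2*n-1)) with hD
  have hAs : HasSum (fun n : ℕ => bb n * (2*(n:ℝ) * x^(2*n-1))) D := hA.hasSum
  have hGs : HasSum (fun n : ℕ => bb n * x^(2*n)) (gg x) := (summable_G hx).hasSum
  have hshift : HasSum (fun n : ℕ => bb (n+1) * (2*((n+1:ℕ):ℝ) * x^(2*(n+1)-1)))
      (D - ∑ i ∈ range 1, bb i * (2*(i:ℝ) * x^(2*i-1))) :=
    (hasSum_nat_add_iff' 1).mpr hAs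
  have hzero : (∑ i ∈ range 1, bb i * (2*(i:ℝ) * x^(2*i-1))) = 0 := by simp
  rw [hzero, sub_zero] at hshift
  have hcomb : HasSum (fun n : ℕ => x^2 * (bb n * (2*(n:ℝ) * x^(2*n-1))) + x * (bb n * x^(2*n)))
      (x^2 * D + x * gg x) := (hAs.mul_left (x^2)).add (hGs.mul_left x)
  have hptw : (fun n : ℕ => x^2 * (bb n * (2*(n:ℝ) * x^(2*n-1))) + x * (bb n * x^(2*n)))
      = fun n : ℕ => bb (n+1) * (2*((n+1:ℕ):ℝ) * x^(2*(n+1)-1)) := by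
    funext n
    rcases n with _ | m
    · norm_num [bb]
      ring
    · have e1 : 2*(m+1)-1 = 2*m+1 := by omega
      have e2 : 2*(m+1+1)-1 = 2*m+3 := by omega
      have e3 : 2*(m+1) = 2*m+2 := by omega
      rw [e1, e2, e3]
      have hr := bb_rec (m+1)
      push_cast at hr ⊢
      linear_combination (-x^(2*m+3)) * hr
  rw [hptw] at hcomb
  have huniq : x^2 * D + x * gg x = D := hcomb.unique hshift
  linear_combination -huniq

lemma gg_zero : gg 0 = 1 := by
  rw [gg, tsum_eq_single 0 (fun n hn => by
    rw [zero_pow (by omega : 2*n ≠ 0), mul_zero])]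
  norm_num [bb]

lemma sqrt_mul_gg {t : ℝ} (h0 : 0 ≤ t) (h1 : t ≤ 1/2) :
    Real.sqrt (1 - t^2) * gg t = 1 := by
  have main : ∀ x ∈ Set.Icc (0:ℝ) (1/2),
      Real.sqrt (1 - x^2) * gg x = Real.sqrt (1 - 0^2) * gg 0 := by
    have hderiv : ∀ x ∈ Set.Icc (0:ℝ) (1/2),
        HasDerivAt (fun y => Real.sqrt (1 - y^2) * gg y) 0 x := by
      intro x hx
      have hx34 : x ∈ Set.Ioo (-(3/4):ℝ) (3/4) := ⟨by linarith [hx.1], by linarith [hx.2]⟩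
      have hxabs : |x| ≤ 3/4 := by rw [abs_le]; exact ⟨hx34.1.le, hx34.2.le⟩
      have hpos : (0:ℝ) < 1 - x^2 := by nlinarith [hx.1, hx.2]
      have hne : 1 - x^2 ≠ 0 := ne_of_gt hpos
      have h1 : HasDerivAt (fun y : ℝ => 1 - y^2) (-(2*x)) x := by
        simpa using (hasDerivAt_pow 2 x).const_sub 1
      have hsqrt : HasDerivAt (fun y : ℝ => Real.sqrt (1 - y^2))
          (1/(2*Real.sqrt (1-x^2)) * -(2*x)) x :=
        (Real.hasDerivAt_sqrt hne).comp x h1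
      have hg := gg_hasDerivAt hx34
      have hk := key hxabs
      have hmul : HasDerivAt (fun y => Real.sqrt (1 - y^2) * gg y) _ x := hsqrt.mul hg
      convert hmul using 1
      have hs : (0:ℝ) < Real.sqrt (1 - x^2) := Real.sqrt_pos.mpr hpos
      have hsq : Real.sqrt (1 - x^2) ^ 2 = 1 - x^2 := Real.sq_sqrt hpos.le
      set s := Real.sqrt (1 - x^2)
      set D := ∑' n, bb n * (2*(n:ℝ) * x^(2*n-1))
      field_simp
      linear_combination (-D)*hsq - hk
    exact constant_of_has_deriv_right_zero
      (fun x hx => (hderiv x hx).continuousAt.continuousWithinAt)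
      (fun x hx => ((hderiv x (Set.mem_Icc.mpr ⟨hx.1, hx.2.le⟩)).hasDerivWithinAt))
  have := main t ⟨h0, h1⟩
  rw [this, gg_zero]
  norm_num

lemma gg_eq {t : ℝ} (h0 : 0 ≤ t) (h1 : t ≤ 1/2) :
    gg t = (Real.sqrt (1 - t^2))⁻¹ := by
  have hpos : (0:ℝ) < 1 - t^2 := by nlinarith
  have hs : (0:ℝ) < Real.sqrt (1 - t^2) := Real.sqrt_pos.mpr hpos
  have := sqrt_mul_gg h0 h1
  field_simp
  linarith [this]

lemma integral_term (n : ℕ) : ∫ t in (0:ℝ)..(1/2), bb n * t^(2*n)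
    = bb n * ((1/2:ℝ)^(2*n+1) / (2*(n:ℝ)+1)) := by
  rw [intervalIntegral.integral_const_mul, integral_pow]
  rw [zero_pow (by omega : 2*n+1 ≠ 0)]
  push_cast
  ring

lemma int_ioc_term (n : ℕ) : ∫ t in Set.Ioc (0:ℝ) (1/2), bb n * t^(2*n)
    = bb n * ((1/2:ℝ)^(2*n+1) / (2*(n:ℝ)+1)) := by
  rw [← integral_term n, intervalIntegral.integral_of_le (by norm_num)]

lemma pow_even_nonneg (t : ℝ) (n : ℕ) : (0:ℝ) ≤ t^(2*n) := by
  rw [pow_mul]; positivity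

lemma swap_sum_int : ∑' n : ℕ, (∫ t in Set.Ioc (0:ℝ) (1/2), bb n * t^(2*n))
    = ∫ t in Set.Ioc (0:ℝ) (1/2), gg t := by
  apply MeasureTheory.integral_tsum_of_summable_integral_norm
  · intro n
    exact (continuous_const.mul (continuous_pow (2*n))).integrableOn_Ioc
  · apply Summable.of_nonneg_of_le
      (fun n => MeasureTheory.integral_nonneg (fun t => norm_nonneg _))
      (fun n => ?_)
      (summable_geometric_of_lt_one (by norm_num) (by norm_num : (1/2:ℝ) < 1))
    have hcongr : ∫ t in Set.Ioc (0:ℝ) (1/2), ‖bb n * t^(2*n)‖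
        = ∫ t in Set.Ioc (0:ℝ) (1/2), bb n * t^(2*n) := by
      apply MeasureTheory.setIntegral_congr_fun measurableSet_Ioc
      intro t _
      exact Real.norm_of_nonneg (mul_nonneg (bb_nonneg n) (pow_even_nonneg t n))
    rw [hcongr, int_ioc_term]
    have h1 : bb n ≤ 1 := bb_le_one n
    have h2 : ((1:ℝ)/2)^(2*n+1) ≤ (1/2)^n := by
      apply pow_le_pow_of_le_one (by norm_num) (by norm_num)
      omega
    have h3 : ((1:ℝ)/2)^(2*n+1) / (2*(n:ℝ)+1) ≤ (1/2)^n := by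
      calc ((1:ℝ)/2)^(2*n+1) / (2*(n:ℝ)+1) ≤ ((1:ℝ)/2)^(2*n+1) / 1 := by
            apply div_le_div_of_nonneg_left (by positivity) (by norm_num) (by linarith [Nat.cast_nonneg (α := ℝ) n])
        _ ≤ (1/2)^n := by rw [div_one]; exact h2
      
    calc bb n * (((1:ℝ)/2)^(2*n+1) / (2*(n:ℝ)+1)) ≤ 1 * ((1/2:ℝ)^n) :=
          mul_le_mul h1 h3 (by positivity) zero_le_one
      _ = (1/2:ℝ)^n := one_mul _

lemma int_gg : ∫ t in Set.Ioc (0:ℝ) (1/2), gg t = π/6 := by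
  rw [MeasureTheory.setIntegral_congr_fun measurableSet_Ioc
    (fun t ht => gg_eq ht.1.le ht.2)]
  rw [← intervalIntegral.integral_of_le (by norm_num)]
  have hftc : ∫ t in (0:ℝ)..(1/2), (Real.sqrt (1-t^2))⁻¹
      = Real.arcsin (1/2) - Real.arcsin 0 := by
    apply intervalIntegral.integral_eq_sub_of_hasDerivAt
    · intro t ht
      rw [Set.uIcc_of_le (by norm_num)] at ht
      have h1 : t ≠ -1 := by intro h; rw [h] at ht; linarith [ht.1]
      have h2 : t ≠ 1 := by intro h; rw [h] at ht; linarith [ht.2]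
      simpa [one_div] using Real.hasDerivAt_arcsin h1 h2
    · apply ContinuousOn.intervalIntegrable
      apply ContinuousOn.inv₀
      · exact Real.continuous_sqrt.comp_continuousOn
          (continuous_const.sub (continuous_pow 2)).continuousOn
      · intro t ht
        rw [Set.uIcc_of_le (by norm_num)] at ht
        have : (0:ℝ) < 1 - t^2 := by nlinarith [ht.1, ht.2]
        exact ne_of_gt (Real.sqrt_pos.mpr this)
  rw [hftc, Real.arcsin_zero, sub_zero,
    show (1/2:ℝ) = Real.sin (π/6) from Real.sin_pi_div_six.symm,
    Real.arcsin_sin (by linarith [Real.pi_pos]) (by linarith [Real.pi_pos])]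

noncomputable def ff (n : ℕ) : ℝ := (Nat.choose (2*n) n : ℝ) / ((16:ℝ)^n * (2*(n:ℝ)+1))

lemma ff_eq (n : ℕ) : ff n = 2 * (bb n * ((1/2:ℝ)^(2*n+1) / (2*(n:ℝ)+1))) := by
  rw [ff, bb]
  have h16 : (16:ℝ)^n = 4^n * 4^n := by rw [← mul_pow]; norm_num
  have hhalf : ((1:ℝ)/2)^(2*n+1) = (1/4)^n * (1/2) := by
    rw [pow_succ, pow_mul]; norm_num
  have h4 : ((1:ℝ)/4)^n * 4^n = 1 := by rw [← mul_pow]; norm_num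
  have h2n : (2*(n:ℝ)+1) ≠ 0 := by positivity
  have h4n : (4:ℝ)^n ≠ 0 := by positivity
  have h4' : ((1:ℝ)/4)^n = ((4:ℝ)^n)⁻¹ := by rw [one_div, inv_pow]
  rw [h16, hhalf, h4']
  field_simp

lemma ff_summable : Summable ff := by
  apply Summable.of_nonneg_of_le (fun n => by rw [ff]; positivity) (fun n => ?_)
    (summable_geometric_of_lt_one (by norm_num) (by norm_num : (1/4:ℝ) < 1))
  rw [ff]
  calc (Nat.choose (2*n) n : ℝ) / ((16:ℝ)^n * (2*(n:ℝ)+1))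
      ≤ (4:ℝ)^n / ((16:ℝ)^n * 1) := by
        apply div_le_div₀ (by positivity)
          (by exact_mod_cast choose_le_four_pow n) (by positivity)
        apply mul_le_mul_of_nonneg_left _ (by positivity)
        push_cast; linarith [Nat.cast_nonneg (α := ℝ) n]
    _ = (1/4:ℝ)^n := by rw [mul_one, ← div_pow]; norm_num

lemma tsum_ff : ∑' n, ff n = π/3 := by
  calc ∑' n, ff n = ∑' n, 2 * (∫ t in Set.Ioc (0:ℝ) (1/2), bb n * t^(2*n)) :=
        tsum_congr fun n => by rw [ff_eq, int_ioc_term]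
    _ = 2 * ∑' n, (∫ t in Set.Ioc (0:ℝ) (1/2), bb n * t^(2*n)) := tsum_mul_left
    _ = 2 * (π/6) := by rw [swap_sum_int, int_gg]
    _ = π/3 := by ring

theorem stmt_5 : (∑' i : ℕ, ((Nat.choose (2*(i+1)) (i+1)) : ℝ) / ((16:ℝ)^(i+1) * (2*((i:ℝ)+1)+1))) = Real.pi / 3 - 1 := by
  have h1 : (∑' i : ℕ, ((Nat.choose (2*(i+1)) (i+1)) : ℝ) / ((16:ℝ)^(i+1) * (2*((i:ℝ)+1)+1)))
      = ∑' i : ℕ, ff (i+1) := tsum_congr fun i => by rw [ff]; push_cast; ring_nf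
  have h2 := Summable.tsum_eq_zero_add ff_summable
  have hf0 : ff 0 = 1 := by norm_num [ff]
  rw [tsum_ff, hf0] at h2
  rw [h1]
  linarith [h2]
end

section
/- The infinite sum of 3^i/(i^2 · binom(2i, i)) for i from 1 to infinity equals 2π²/9. -/
open Real Finset intervalIntegral Filter

noncomputable def Dd (n : ℕ) (t : ℝ) : ℝ := (4 * Real.sin t ^ 2) ^ n / (Nat.centralBinom n : ℝ)

lemma Dd_cont (n : ℕ) : Continuous (Dd n) := by unfold Dd; fun_prop

lemma psi_deriv (m : ℕ) (θ t : ℝ) :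
    HasDerivAt (fun t => (θ - t) * (((4:ℝ)^(m+1) / (((m:ℝ)+1)^2 * (Nat.centralBinom (m+1) : ℝ)) * (2*(m:ℝ)+2)) * (Real.sin t ^ (2*m+1) * Real.cos t))
      + (4:ℝ)^(m+1) / (((m:ℝ)+1)^2 * (Nat.centralBinom (m+1) : ℝ)) * Real.sin t ^ (2*m+2))
      (4 * ((θ - t) * (Dd m t - Dd (m+1) t))) t := by
  set c : ℝ := (4:ℝ)^(m+1) / (((m:ℝ)+1)^2 * (Nat.centralBinom (m+1) : ℝ)) with hc
  have hs := Real.hasDerivAt_sin t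
  have hcos := Real.hasDerivAt_cos t
  have h1 : HasDerivAt (fun t => Real.sin t ^ (2*m+1)) (((2*m+1 : ℕ) : ℝ) * Real.sin t ^ (2*m) * Real.cos t) t := by
    simpa using hs.fun_pow (2*m+1)
  have h2 : HasDerivAt (fun t => Real.sin t ^ (2*m+2)) (((2*m+2 : ℕ) : ℝ) * Real.sin t ^ (2*m+1) * Real.cos t) t := by
    simpa using hs.fun_pow (2*m+2)
  have h3 : HasDerivAt (fun t : ℝ => θ - t) (-1) t := by simpa using (hasDerivAt_id t).const_sub θ
  have h4 := (h1.fun_mul hcos).const_mul (c * (2*(m:ℝ)+2))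
  have h6 := (h3.fun_mul h4).fun_add (h2.const_mul c)
  refine h6.congr_deriv ?_
  have hBm : (0:ℝ) < (Nat.centralBinom m : ℝ) := by exact_mod_cast Nat.centralBinom_pos m
  have hB : ((Nat.centralBinom (m+1) : ℝ)) = 2*(2*(m:ℝ)+1) * (Nat.centralBinom m : ℝ) / ((m:ℝ)+1) := by
    have := Nat.succ_mul_centralBinom_succ m
    have h2 : ((m:ℝ)+1) * ((Nat.centralBinom (m+1) : ℝ)) = 2*(2*(m:ℝ)+1) * (Nat.centralBinom m : ℝ) := by
      exact_mod_cast this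
    field_simp
    linarith
  have hcc : ((2*m+1 : ℕ) : ℝ) * Real.sin t ^ (2*m) * Real.cos t * Real.cos t
      = ((2*m+1 : ℕ) : ℝ) * (Real.sin t ^ (2*m) - Real.sin t ^ (2*m+2)) := by
    linear_combination (((2*m+1 : ℕ) : ℝ) * Real.sin t ^ (2*m)) * (Real.sin_sq_add_cos_sq t)
  rw [hcc]
  simp only [Dd, hc, hB]
  have hm1 : ((m:ℝ)+1) ≠ 0 := by positivity
  have h2m1 : (2*(m:ℝ)+1) ≠ 0 := by positivity
  push_cast
  field_simp
  ring

lemma step (m : ℕ) (θ : ℝ) :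
    (4 * Real.sin θ ^ 2) ^ (m+1) / (((m:ℝ)+1)^2 * (Nat.centralBinom (m+1) : ℝ))
    = ∫ t in (0:ℝ)..θ, 4 * ((θ - t) * (Dd m t - Dd (m+1) t)) := by
  have hcont : Continuous (fun t => 4 * ((θ - t) * (Dd m t - Dd (m+1) t))) := by
    have := Dd_cont m; have := Dd_cont (m+1); fun_prop
  have := integral_eq_sub_of_hasDerivAt (f := fun t => (θ - t) * (((4:ℝ)^(m+1) / (((m:ℝ)+1)^2 * (Nat.centralBinom (m+1) : ℝ)) * (2*(m:ℝ)+2)) * (Real.sin t ^ (2*m+1) * Real.cos t))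
      + (4:ℝ)^(m+1) / (((m:ℝ)+1)^2 * (Nat.centralBinom (m+1) : ℝ)) * Real.sin t ^ (2*m+2))
      (fun t _ => psi_deriv m θ t) (hcont.intervalIntegrable 0 θ)
  rw [this]
  rw [show Real.sin 0 = 0 from Real.sin_zero]
  rw [zero_pow (by omega : 2*m+1 ≠ 0), zero_pow (by omega : 2*m+2 ≠ 0)]
  rw [mul_pow]
  ring

lemma partial_sum (θ : ℝ) (N : ℕ) :
    ∑ n ∈ range N, (4 * Real.sin θ ^ 2) ^ (n+1) / (((n:ℝ)+1)^2 * (Nat.centralBinom (n+1) : ℝ))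
    = 2*θ^2 - ∫ t in (0:ℝ)..θ, 4 * ((θ - t) * Dd N t) := by
  induction N with
  | zero =>
    simp only [range_zero, sum_empty]
    have h1 : (∫ t in (0:ℝ)..θ, 4 * ((θ - t) * Dd 0 t)) = ∫ t in (0:ℝ)..θ, (4*θ - 4*t) := by
      apply integral_congr
      intro t _
      simp [Dd, Nat.centralBinom_zero]
      ring
    rw [h1, integral_sub intervalIntegrable_const (((by fun_prop : Continuous fun t : ℝ => 4*t)).intervalIntegrable 0 θ),
      integral_const]
    have h2 : (∫ t in (0:ℝ)..θ, 4*t) = 4 * ∫ t in (0:ℝ)..θ, t := integral_const_mul 4 _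
    rw [h2, integral_id]
    simp
    ring
  | succ N ih =>
    rw [Finset.sum_range_succ, ih, step N θ]
    have h1 : (∫ t in (0:ℝ)..θ, 4 * ((θ - t) * (Dd N t - Dd (N+1) t)))
        = (∫ t in (0:ℝ)..θ, 4 * ((θ - t) * Dd N t)) - ∫ t in (0:ℝ)..θ, 4 * ((θ - t) * Dd (N+1) t) := by
      rw [← integral_sub]
      · apply integral_congr; intro t _; ring
      · exact ((by have := Dd_cont N; fun_prop : Continuous fun t => 4 * ((θ - t) * Dd N t))).intervalIntegrable 0 θ
      · exact ((by have := Dd_cont (N+1); fun_prop : Continuous fun t => 4 * ((θ - t) * Dd (N+1) t))).intervalIntegrable 0 θ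
    rw [h1]
    ring

lemma sin_pi3 : 4 * Real.sin (Real.pi/3) ^ 2 = 3 := by
  rw [Real.sin_pi_div_three]
  rw [div_pow, Real.sq_sqrt (by norm_num : (3:ℝ) ≥ 0)]
  norm_num

lemma Dd_bound (N : ℕ) {t : ℝ} (ht : t ∈ Set.uIoc (0:ℝ) (Real.pi/3)) :
    ‖Dd N t‖ ≤ (2*(N:ℝ)+1) * (3/4)^N := by
  have hpi : (0:ℝ) < Real.pi / 3 := by positivity
  rw [Set.uIoc_of_le hpi.le] at ht
  obtain ⟨ht0, ht1⟩ := ht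
  have hs0 : 0 ≤ Real.sin t := Real.sin_nonneg_of_nonneg_of_le_pi ht0.le
    (ht1.trans (by linarith [Real.pi_pos]))
  have hmono : Real.sin t ≤ Real.sin (Real.pi/3) := by
    apply Real.sin_le_sin_of_le_of_le_pi_div_two (by linarith [Real.pi_pos]) (by linarith [Real.pi_pos]) ht1
  have h4 : 4 * Real.sin t ^ 2 ≤ 3 := by
    rw [← sin_pi3]
    have := Real.sin_nonneg_of_nonneg_of_le_pi (le_of_lt hpi) (by linarith [Real.pi_pos]) 
    nlinarith
  have h40 : (0:ℝ) ≤ 4 * Real.sin t ^ 2 := by positivity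
  have hCnat : 4^N ≤ (2*N+1) * Nat.centralBinom N := by
    rcases Nat.eq_zero_or_pos N with h | h
    · subst h; simp [Nat.centralBinom]
    · calc 4^N ≤ 2*N * Nat.centralBinom N := Nat.four_pow_le_two_mul_self_mul_centralBinom N h
        _ ≤ (2*N+1) * Nat.centralBinom N := Nat.mul_le_mul_right _ (by omega)
  have hC : (4:ℝ)^N ≤ (2*(N:ℝ)+1) * (Nat.centralBinom N : ℝ) := by
    exact_mod_cast hCnat
  have hCpos : (0:ℝ) < (Nat.centralBinom N : ℝ) := by exact_mod_cast Nat.centralBinom_pos N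
  rw [Real.norm_eq_abs, abs_of_nonneg (by unfold Dd; positivity)]
  unfold Dd
  rw [div_le_iff₀ hCpos]
  calc (4 * Real.sin t ^ 2) ^ N ≤ 3^N := pow_le_pow_left₀ h40 h4 N
    _ ≤ (2*(N:ℝ)+1) * (3/4)^N * (Nat.centralBinom N : ℝ) := by
        have hm : (3:ℝ)^N * 4^N ≤ 3^N * ((2*(N:ℝ)+1) * (Nat.centralBinom N : ℝ)) :=
          mul_le_mul_of_nonneg_left hC (by positivity)
        have h4N : (0:ℝ) < 4^N := by positivity
        have hrw : (2*(N:ℝ)+1) * ((3:ℝ)/4)^N * (Nat.centralBinom N : ℝ)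
            = (3^N * ((2*(N:ℝ)+1) * (Nat.centralBinom N : ℝ))) / 4^N := by
          rw [div_pow]; ring
        rw [hrw, le_div_iff₀ h4N]
        linarith

lemma remainder_tendsto :
    Tendsto (fun N => ∫ t in (0:ℝ)..(Real.pi/3), 4 * ((Real.pi/3 - t) * Dd N t)) atTop (nhds 0) := by
  have hnorm : ∀ N : ℕ, ‖∫ t in (0:ℝ)..(Real.pi/3), 4 * ((Real.pi/3 - t) * Dd N t)‖
      ≤ 4 * (Real.pi/3) * ((2*(N:ℝ)+1) * (3/4)^N) * (Real.pi/3) := by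
    intro N
    have hb : ∀ t ∈ Set.uIoc (0:ℝ) (Real.pi/3),
        ‖4 * ((Real.pi/3 - t) * Dd N t)‖ ≤ 4 * (Real.pi/3) * ((2*(N:ℝ)+1) * (3/4)^N) := by
      intro t ht
      have hD := Dd_bound N ht
      have hpi : (0:ℝ) < Real.pi / 3 := by positivity
      have ht' := ht
      rw [Set.uIoc_of_le hpi.le] at ht'
      rw [norm_mul, norm_mul]
      have h1 : ‖(4:ℝ)‖ = 4 := by norm_num
      have h2 : ‖Real.pi/3 - t‖ ≤ Real.pi/3 := by
        rw [Real.norm_eq_abs, abs_of_nonneg (by linarith [ht'.2])]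
        linarith [ht'.1]
      rw [h1, mul_assoc]
      apply mul_le_mul_of_nonneg_left _ (by norm_num)
      apply mul_le_mul h2 hD (norm_nonneg _) (le_of_lt hpi)
    have := norm_integral_le_of_norm_le_const hb
    simpa [abs_of_nonneg (le_of_lt (by positivity : (0:ℝ) < Real.pi/3))] using this
  have htend : Tendsto (fun N : ℕ => 4 * (Real.pi/3) * ((2*(N:ℝ)+1) * (3/4)^N) * (Real.pi/3)) atTop (nhds 0) := by
    have h1 : Tendsto (fun N : ℕ => (2*(N:ℝ)+1) * (3/4)^N) atTop (nhds 0) := by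
      have hs : Summable (fun N : ℕ => (2*(N:ℝ)+1) * (3/4)^N) := by
        have := (summable_pow_mul_geometric_of_norm_lt_one (R := ℝ) 1 (r := 3/4) (by norm_num)).mul_left 2
        have h0 := summable_geometric_of_lt_one (by norm_num : (0:ℝ) ≤ 3/4) (by norm_num)
        simpa [add_mul, mul_assoc, pow_one] using this.add h0
      exact hs.tendsto_atTop_zero
    have := (h1.const_mul (4 * (Real.pi/3))).mul_const (Real.pi/3)
    simpa using this
  exact squeeze_zero_norm hnorm htend

theorem stmt_8 : (∑' i : ℕ, (3:ℝ)^(i+1) / (((i:ℝ)+1)^2 * ((Nat.choose (2*(i+1)) (i+1)) : ℝ))) = 2 * Real.pi^2 / 9 := by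
  have h3 : ∀ n : ℕ, (4 * Real.sin (Real.pi/3) ^ 2) ^ (n+1) / (((n:ℝ)+1)^2 * (Nat.centralBinom (n+1) : ℝ))
      = (3:ℝ)^(n+1) / (((n:ℝ)+1)^2 * ((Nat.choose (2*(n+1)) (n+1)) : ℝ)) := by
    intro n; rw [sin_pi3]; rfl
  have hps : ∀ N, ∑ n ∈ Finset.range N, (3:ℝ)^(n+1) / (((n:ℝ)+1)^2 * ((Nat.choose (2*(n+1)) (n+1)) : ℝ))
      = 2*(Real.pi/3)^2 - ∫ t in (0:ℝ)..(Real.pi/3), 4 * ((Real.pi/3 - t) * Dd N t) := by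
    intro N
    rw [← partial_sum (Real.pi/3) N]
    exact Finset.sum_congr rfl (fun n _ => (h3 n).symm)
  have htend : Tendsto (fun N => ∑ n ∈ Finset.range N,
      (3:ℝ)^(n+1) / (((n:ℝ)+1)^2 * ((Nat.choose (2*(n+1)) (n+1)) : ℝ))) atTop
      (nhds (2 * Real.pi^2 / 9)) := by
    simp only [hps]
    have := tendsto_const_nhds (x := 2*(Real.pi/3)^2) (f := atTop (α := ℕ)) |>.sub remainder_tendsto
    have hval : 2*(Real.pi/3)^2 - 0 = 2*Real.pi^2/9 := by ring
    rwa [hval] at this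
  have hnn : ∀ i : ℕ, 0 ≤ (3:ℝ)^(i+1) / (((i:ℝ)+1)^2 * ((Nat.choose (2*(i+1)) (i+1)) : ℝ)) := by
    intro i; positivity
  exact ((hasSum_iff_tendsto_nat_of_nonneg hnn _).mpr htend).tsum_eq
end

section
/- The infinite sum over i ≥ 1 of 3^i · (∑_{j=1}^i 1/j²)/((2i+1) · binom(2i, i)) equals 8π³/(81√3). -/
open Real Finset

namespace P11

noncomputable def c (n : ℕ) : ℝ := (Nat.centralBinom n : ℝ)

lemma c_pos (n : ℕ) : 0 < c n := by
  unfold c; exact_mod_cast Nat.centralBinom_pos n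

lemma crec (n : ℕ) : ((n:ℝ)+1) * c (n+1) = 2*(2*(n:ℝ)+1) * c n := by
  have h := Nat.succ_mul_centralBinom_succ n
  have h2 : (((n+1) * Nat.centralBinom (n+1) : ℕ) : ℝ)
      = ((2 * (2*n+1) * Nat.centralBinom n : ℕ) : ℝ) := by rw [h]
  push_cast at h2
  unfold c; push_cast; linarith

noncomputable def h2 (n : ℕ) : ℝ := ∑ j ∈ Finset.range n, 1/((j:ℝ)+1)^2

lemma h2_nonneg (n : ℕ) : 0 ≤ h2 n := by
  apply Finset.sum_nonneg; intro j _; positivity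

lemma h2_succ (n : ℕ) : h2 (n+1) = h2 n + 1/((n:ℝ)+1)^2 := by
  simp [h2, Finset.sum_range_succ]

lemma h2_le (n : ℕ) : h2 n ≤ n := by
  calc h2 n ≤ ∑ j ∈ Finset.range n, 1 := by
        apply Finset.sum_le_sum; intro j _
        rw [div_le_one (by positivity)]
        nlinarith [Nat.cast_nonneg (α := ℝ) j]
    _ = n := by simp

noncomputable def a (n : ℕ) : ℝ := 4^n/((n:ℝ)^2 * c n)
noncomputable def b (n : ℕ) : ℝ := 4^n * h2 n/((2*(n:ℝ)+1) * c n)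

lemma pow4_le (n : ℕ) (h : 0 < n) : (4:ℝ)^n ≤ 2*n*c n := by
  have h2 := Nat.four_pow_le_two_mul_self_mul_centralBinom n h
  unfold c; exact_mod_cast h2

lemma a_nonneg (n : ℕ) : 0 ≤ a n := by
  have := (c_pos n).le; unfold a; positivity

lemma b_nonneg (n : ℕ) : 0 ≤ b n := by
  have h1 := (c_pos n).le
  have h2 := h2_nonneg n
  have h3 : (0:ℝ) ≤ 2*(n:ℝ)+1 := by positivity
  unfold b; positivity

lemma a_le (i : ℕ) : a (i+1) ≤ 2 := by
  have hc := c_pos (i+1)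
  have h4 := pow4_le (i+1) (Nat.succ_pos i)
  have hi : (0:ℝ) ≤ (i:ℝ) := Nat.cast_nonneg i
  unfold a
  rw [div_le_iff₀ (by positivity)]
  push_cast at h4 ⊢
  nlinarith [hc, hi, mul_nonneg hi hc.le, mul_nonneg (mul_nonneg hi hi) hc.le]

lemma b_le (i : ℕ) : b (i+1) ≤ (i:ℝ)+1 := by
  have hc := c_pos (i+1)
  have h4 := pow4_le (i+1) (Nat.succ_pos i)
  have hh := h2_le (i+1)
  have hh0 := h2_nonneg (i+1)
  have hi : (0:ℝ) ≤ (i:ℝ) := Nat.cast_nonneg i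
  have hp : (0:ℝ) < (4:ℝ)^(i+1) := by positivity
  unfold b
  rw [div_le_iff₀ (by positivity)]
  push_cast at h4 hh ⊢
  have key : (4:ℝ)^(i+1) * h2 (i+1) ≤ (2*((i:ℝ)+1)*c (i+1)) * ((i:ℝ)+1) := by
    apply mul_le_mul h4 hh hh0 (by positivity)
  nlinarith [key, hc, hi, mul_nonneg (mul_nonneg hi hi) hc.le, mul_nonneg hi hc.le]

lemma a1 : a 1 = 2 := by
  have : Nat.centralBinom 1 = 2 := rfl
  simp [a, c, this]; norm_num

lemma b1 : b 1 = 2/3 := by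
  have : Nat.centralBinom 1 = 2 := rfl
  simp [b, c, h2, this]; norm_num

lemma c_succ (i : ℕ) : c (i+2) = 2*(2*(i:ℝ)+3)*c (i+1)/((i:ℝ)+2) := by
  have e1 := crec (i+1)
  push_cast at e1
  field_simp
  linarith

lemma rec_a (i : ℕ) : (2*(i:ℝ)+4)*(2*(i:ℝ)+3) * a (i+2) = (2*(i:ℝ)+2)^2 * a (i+1) := by
  have h1 := (c_pos (i+1)).ne'
  have hi2 : ((i:ℝ)+2) ≠ 0 := by positivity
  have h23 : (2*(i:ℝ)+3) ≠ 0 := by positivity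
  unfold a
  rw [c_succ i]
  push_cast
  rw [pow_succ (4:ℝ) (i+1)]
  field_simp
  ring

lemma rec_b (i : ℕ) : (2*(i:ℝ)+5) * b (i+2) = a (i+2) + (2*(i:ℝ)+4) * b (i+1) := by
  have h1 := (c_pos (i+1)).ne'
  have hi2 : ((i:ℝ)+2) ≠ 0 := by positivity
  have h23 : (2*(i:ℝ)+3) ≠ 0 := by positivity
  have h25 : (2*(i:ℝ)+5) ≠ 0 := by positivity
  unfold a b
  rw [c_succ i, h2_succ (i+1)]
  push_cast
  rw [pow_succ (4:ℝ) (i+1)]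
  field_simp
  ring


noncomputable def u (i : ℕ) : ℝ := 40*((i:ℝ)+1)^3*(81/100)^i

lemma summable_u : Summable u := by
  have h : ‖(81/100 : ℝ)‖ < 1 := by rw [Real.norm_eq_abs]; rw [abs_of_pos (by norm_num)]; norm_num
  have h3 := summable_pow_mul_geometric_of_norm_lt_one (R := ℝ) 3 h
  have h2 := summable_pow_mul_geometric_of_norm_lt_one (R := ℝ) 2 h
  have h1 := summable_pow_mul_geometric_of_norm_lt_one (R := ℝ) 1 h
  have h0 := summable_pow_mul_geometric_of_norm_lt_one (R := ℝ) 0 h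
  have hs : Summable (fun n : ℕ => ((n:ℝ)^3*(81/100)^n + (n:ℝ)^2*(81/100)^n*3)
      + (n:ℝ)^1*(81/100)^n*3 + (1:ℝ)*(81/100)^n) := by
    exact ((h3.add (h2.mul_right 3)).add (h1.mul_right 3)).add (by simpa using h0)
  apply (hs.mul_left 40).congr
  intro n
  unfold u
  ring

lemma pow_abs_le {y : ℝ} (hy : |y| ≤ 9/10) (i k : ℕ) : |y^(2*i+k)| ≤ (81/100)^i := by
  have h1 : |y| ≤ 1 := le_trans hy (by norm_num)
  have h0 : 0 ≤ |y| := abs_nonneg y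
  calc |y^(2*i+k)| = |y|^(2*i) * |y|^k := by rw [abs_pow, pow_add]
    _ ≤ |y|^(2*i) * 1 := by
        apply mul_le_mul_of_nonneg_left (pow_le_one₀ h0 h1) (by positivity)
    _ = (|y|^2)^i := by rw [mul_one, ← pow_mul]
    _ ≤ ((9/10:ℝ)^2)^i := by
        apply pow_le_pow_left₀ (by positivity) (by nlinarith)
    _ = (81/100)^i := by norm_num

lemma bound_gen {y : ℝ} (hy : |y| ≤ 9/10) {p : ℝ} (i k : ℕ)
    (hp : |p| ≤ 40*((i:ℝ)+1)^3) : |p * y^(2*i+k)| ≤ u i := by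
  unfold u
  rw [abs_mul]
  calc |p| * |y^(2*i+k)| ≤ (40*((i:ℝ)+1)^3) * (81/100)^i := by
        apply mul_le_mul hp (pow_abs_le hy i k) (abs_nonneg _) (by positivity)
    _ = 40*((i:ℝ)+1)^3*(81/100)^i := by ring

lemma summable_gen {y : ℝ} (hy : |y| ≤ 9/10) (p : ℕ → ℝ) (k : ℕ → ℕ)
    (hp : ∀ i, |p i| ≤ 40*((i:ℝ)+1)^3) :
    Summable (fun i => p i * y^(2*i + k i)) := by
  apply Summable.of_norm_bounded summable_u
  intro i
  exact bound_gen hy i (k i) (hp i)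

-- coefficient bounds in the master form
lemma cube_ge (i : ℕ) : (1:ℝ) ≤ ((i:ℝ)+1)^3 := by
  have hi : (0:ℝ) ≤ (i:ℝ) := Nat.cast_nonneg i
  nlinarith [mul_nonneg hi hi, mul_nonneg (mul_nonneg hi hi) hi]

lemma poly_mono (i : ℕ) (q : ℝ) (hq0 : 0 ≤ q) (hq : q ≤ 10*((i:ℝ)+1)^2) :
    q ≤ 40*((i:ℝ)+1)^3 := by
  have hi : (0:ℝ) ≤ (i:ℝ) := Nat.cast_nonneg i
  nlinarith [mul_nonneg hi hi, mul_nonneg (mul_nonneg hi hi) hi]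

lemma pb_a (i : ℕ) : |a (i+1)| ≤ 40*((i:ℝ)+1)^3 := by
  rw [abs_of_nonneg (a_nonneg _)]
  have h := a_le i
  have hi : (0:ℝ) ≤ (i:ℝ) := Nat.cast_nonneg i
  apply poly_mono i _ (a_nonneg _)
  nlinarith [mul_nonneg hi hi]

lemma pb_a1 (i : ℕ) : |(2*(i:ℝ)+2) * a (i+1)| ≤ 40*((i:ℝ)+1)^3 := by
  have h0 : (0:ℝ) ≤ 2*(i:ℝ)+2 := by positivity
  rw [abs_of_nonneg (mul_nonneg h0 (a_nonneg _))]
  have h := a_le i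
  have hi : (0:ℝ) ≤ (i:ℝ) := Nat.cast_nonneg i
  apply poly_mono i _ (mul_nonneg h0 (a_nonneg _))
  have step : (2*(i:ℝ)+2) * a (i+1) ≤ (2*(i:ℝ)+2) * 2 := by
    apply mul_le_mul_of_nonneg_left h h0
  nlinarith [mul_nonneg hi hi]

lemma pb_a2 (i : ℕ) : |(2*(i:ℝ)+2)*(2*(i:ℝ)+1) * a (i+1)| ≤ 40*((i:ℝ)+1)^3 := by
  have h0 : (0:ℝ) ≤ (2*(i:ℝ)+2)*(2*(i:ℝ)+1) := by positivity
  rw [abs_of_nonneg (mul_nonneg h0 (a_nonneg _))]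
  have h := a_le i
  have hi : (0:ℝ) ≤ (i:ℝ) := Nat.cast_nonneg i
  apply poly_mono i _ (mul_nonneg h0 (a_nonneg _))
  have step : (2*(i:ℝ)+2)*(2*(i:ℝ)+1) * a (i+1) ≤ (2*(i:ℝ)+2)*(2*(i:ℝ)+1) * 2 := by
    apply mul_le_mul_of_nonneg_left h h0
  nlinarith [mul_nonneg hi hi]

lemma pb_b (i : ℕ) : |b (i+1)| ≤ 40*((i:ℝ)+1)^3 := by
  rw [abs_of_nonneg (b_nonneg _)]
  have h := b_le i
  have hi : (0:ℝ) ≤ (i:ℝ) := Nat.cast_nonneg i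
  apply poly_mono i _ (b_nonneg _)
  nlinarith [mul_nonneg hi hi]

lemma pb_b1 (i : ℕ) : |(2*(i:ℝ)+3) * b (i+1)| ≤ 40*((i:ℝ)+1)^3 := by
  have h0 : (0:ℝ) ≤ 2*(i:ℝ)+3 := by positivity
  rw [abs_of_nonneg (mul_nonneg h0 (b_nonneg _))]
  have h := b_le i
  have hi : (0:ℝ) ≤ (i:ℝ) := Nat.cast_nonneg i
  apply poly_mono i _ (mul_nonneg h0 (b_nonneg _))
  have step : (2*(i:ℝ)+3) * b (i+1) ≤ (2*(i:ℝ)+3) * ((i:ℝ)+1) := by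
    apply mul_le_mul_of_nonneg_left h h0
  nlinarith [mul_nonneg hi hi]

-- The domain
def I : Set ℝ := Set.Ioo (-(9/10) : ℝ) (9/10)

lemma mem_I_abs {y : ℝ} (hy : y ∈ I) : |y| ≤ 9/10 := by
  rw [abs_le]; exact ⟨hy.1.le, hy.2.le⟩

lemma I_open : IsOpen I := isOpen_Ioo
lemma I_conn : IsPreconnected I := (convex_Ioo _ _).isPreconnected
lemma zero_mem_I : (0:ℝ) ∈ I := by constructor <;> norm_num

-- Series functions
noncomputable def HH (x : ℝ) : ℝ := ∑' i : ℕ, a (i+1) * x^(2*i+2)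
noncomputable def H1 (x : ℝ) : ℝ := ∑' i : ℕ, (2*(i:ℝ)+2) * a (i+1) * x^(2*i+1)
noncomputable def H2 (x : ℝ) : ℝ := ∑' i : ℕ, (2*(i:ℝ)+2)*(2*(i:ℝ)+1) * a (i+1) * x^(2*i)
noncomputable def GG (x : ℝ) : ℝ := ∑' i : ℕ, b (i+1) * x^(2*i+3)
noncomputable def G1 (x : ℝ) : ℝ := ∑' i : ℕ, (2*(i:ℝ)+3) * b (i+1) * x^(2*i+2)

lemma hasDerivAt_HH {y : ℝ} (hy : y ∈ I) : HasDerivAt HH (H1 y) y := by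
  apply hasDerivAt_tsum_of_isPreconnected summable_u I_open I_conn
    (g := fun i x => a (i+1) * x^(2*i+2)) (g' := fun (i:ℕ) x => (2*(i:ℝ)+2) * a (i+1) * x^(2*i+1))
    ?_ ?_ zero_mem_I ?_ hy
  · intro i x _
    have h := (hasDerivAt_pow (2*i+2) x).const_mul (a (i+1))
    refine h.congr_deriv ?_
    push_cast; ring
  · intro i x hx
    rw [Real.norm_eq_abs]
    exact bound_gen (mem_I_abs hx) i 1 (pb_a1 i)
  · apply summable_of_ne_finset_zero (s := ∅)
    intro i _
    simp

lemma hasDerivAt_H1 {y : ℝ} (hy : y ∈ I) : HasDerivAt H1 (H2 y) y := by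
  apply hasDerivAt_tsum_of_isPreconnected summable_u I_open I_conn
    (g := fun (i:ℕ) x => (2*(i:ℝ)+2) * a (i+1) * x^(2*i+1))
    (g' := fun (i:ℕ) x => (2*(i:ℝ)+2)*(2*(i:ℝ)+1) * a (i+1) * x^(2*i))
    ?_ ?_ zero_mem_I ?_ hy
  · intro i x _
    have h := (hasDerivAt_pow (2*i+1) x).const_mul ((2*(i:ℝ)+2) * a (i+1))
    refine h.congr_deriv ?_
    push_cast; ring
  · intro i x hx
    rw [Real.norm_eq_abs]
    exact bound_gen (mem_I_abs hx) i 0 (pb_a2 i)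
  · apply summable_of_ne_finset_zero (s := ∅)
    intro i _
    simp

lemma hasDerivAt_GG {y : ℝ} (hy : y ∈ I) : HasDerivAt GG (G1 y) y := by
  apply hasDerivAt_tsum_of_isPreconnected summable_u I_open I_conn
    (g := fun i x => b (i+1) * x^(2*i+3))
    (g' := fun (i:ℕ) x => (2*(i:ℝ)+3) * b (i+1) * x^(2*i+2))
    ?_ ?_ zero_mem_I ?_ hy
  · intro i x _
    have h := (hasDerivAt_pow (2*i+3) x).const_mul (b (i+1))
    refine h.congr_deriv ?_
    push_cast; ring
  · intro i x hx
    rw [Real.norm_eq_abs]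
    exact bound_gen (mem_I_abs hx) i 2 (pb_b1 i)
  · apply summable_of_ne_finset_zero (s := ∅)
    intro i _
    simp

lemma pb_a3 (i : ℕ) : |(2*(i:ℝ)+2)^2 * a (i+1)| ≤ 40*((i:ℝ)+1)^3 := by
  have h0 : (0:ℝ) ≤ (2*(i:ℝ)+2)^2 := by positivity
  rw [abs_of_nonneg (mul_nonneg h0 (a_nonneg _))]
  have h := a_le i
  have hi : (0:ℝ) ≤ (i:ℝ) := Nat.cast_nonneg i
  apply poly_mono i _ (mul_nonneg h0 (a_nonneg _))
  have step : (2*(i:ℝ)+2)^2 * a (i+1) ≤ (2*(i:ℝ)+2)^2 * 2 := by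
    apply mul_le_mul_of_nonneg_left h h0
  nlinarith [mul_nonneg hi hi]

lemma pb_a' (i : ℕ) : |a (i+2)| ≤ 40*((i:ℝ)+1)^3 := by
  rw [abs_of_nonneg (a_nonneg _)]
  have h := a_le (i+1)
  have hi : (0:ℝ) ≤ (i:ℝ) := Nat.cast_nonneg i
  apply poly_mono i _ (a_nonneg _)
  nlinarith [mul_nonneg hi hi]

lemma pb_b2 (i : ℕ) : |(2*(i:ℝ)+5) * b (i+2)| ≤ 40*((i:ℝ)+1)^3 := by
  have h0 : (0:ℝ) ≤ 2*(i:ℝ)+5 := by positivity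
  rw [abs_of_nonneg (mul_nonneg h0 (b_nonneg _))]
  have h : b (i+2) ≤ (i:ℝ)+2 := by
    have h' := b_le (i+1)
    push_cast at h'
    convert h' using 1
    ring
  have hi : (0:ℝ) ≤ (i:ℝ) := Nat.cast_nonneg i
  apply poly_mono i _ (mul_nonneg h0 (b_nonneg _))
  have step : (2*(i:ℝ)+5) * b (i+2) ≤ (2*(i:ℝ)+5) * ((i:ℝ)+2) := by
    apply mul_le_mul_of_nonneg_left h h0
  nlinarith [mul_nonneg hi hi]

lemma odeH {y : ℝ} (hy : |y| ≤ 9/10) : (1 - y^2) * H2 y = 4 + y * H1 y := by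
  have s3 : Summable (fun i : ℕ => (2*(i:ℝ)+2)*(2*(i:ℝ)+1) * a (i+1) * y^(2*i)) := by
    simpa using summable_gen hy _ (fun _ => 0) pb_a2
  have sSq : Summable (fun i : ℕ => (2*(i:ℝ)+2)^2 * a (i+1) * y^(2*i+2)) :=
    summable_gen hy _ (fun _ => 2) pb_a3
  have sB : Summable (fun i : ℕ => (2*(i:ℝ)+2)*(2*(i:ℝ)+1) * a (i+1) * y^(2*i+2)) :=
    summable_gen hy _ (fun _ => 2) pb_a2
  have key : H2 y = 4 + ∑' i : ℕ, (2*(i:ℝ)+2)^2 * a (i+1) * y^(2*i+2) := by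
    rw [H2, Summable.tsum_eq_zero_add s3]
    congr 1
    · norm_num [a1]
    · apply tsum_congr; intro i
      have e : 2*(i+1) = 2*i+2 := by ring
      push_cast
      rw [e]
      linear_combination y^(2*i+2) * rec_a i
  have hH1 : y * H1 y = ∑' i : ℕ, (2*(i:ℝ)+2) * a (i+1) * y^(2*i+2) := by
    rw [H1, ← tsum_mul_left]
    apply tsum_congr; intro i
    ring
  have hH2 : y^2 * H2 y = ∑' i : ℕ, (2*(i:ℝ)+2)*(2*(i:ℝ)+1) * a (i+1) * y^(2*i+2) := by
    rw [H2, ← tsum_mul_left]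
    apply tsum_congr; intro i
    ring
  have expand : (1 - y^2) * H2 y = H2 y - y^2 * H2 y := by ring
  rw [expand, hH2, hH1, key]
  have : (4 + ∑' i : ℕ, (2*(i:ℝ)+2)^2 * a (i+1) * y^(2*i+2))
      - ∑' i : ℕ, (2*(i:ℝ)+2)*(2*(i:ℝ)+1) * a (i+1) * y^(2*i+2)
      = 4 + ∑' i : ℕ, ((2*(i:ℝ)+2)^2 * a (i+1) * y^(2*i+2)
          - (2*(i:ℝ)+2)*(2*(i:ℝ)+1) * a (i+1) * y^(2*i+2)) := by
    rw [Summable.tsum_sub sSq sB]; ring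
  rw [this]
  congr 1
  apply tsum_congr; intro i
  ring

lemma odeG {y : ℝ} (hy : |y| ≤ 9/10) : (1 - y^2) * G1 y = HH y + y * GG y := by
  have s5 : Summable (fun i : ℕ => (2*(i:ℝ)+3) * b (i+1) * y^(2*i+2)) :=
    summable_gen hy _ (fun _ => 2) pb_b1
  have sA : Summable (fun i : ℕ => a (i+1) * y^(2*i+2)) :=
    summable_gen hy _ (fun _ => 2) pb_a
  have sA' : Summable (fun i : ℕ => a (i+2) * y^(2*i+4)) :=
    summable_gen hy _ (fun _ => 4) pb_a'
  have sb4 : Summable (fun i : ℕ => b (i+1) * y^(2*i+4)) :=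
    summable_gen hy _ (fun _ => 4) pb_b
  have sb34 : Summable (fun i : ℕ => (2*(i:ℝ)+3) * b (i+1) * y^(2*i+4)) :=
    summable_gen hy _ (fun _ => 4) pb_b1
  have lhs : G1 y = 2*y^2 + ∑' i : ℕ, (2*(i:ℝ)+5) * b (i+2) * y^(2*i+4) := by
    rw [G1, Summable.tsum_eq_zero_add s5]
    congr 1
    · norm_num [b1]
    · apply tsum_congr; intro i
      have e1 : 2*(i+1)+2 = 2*i+4 := by ring
      push_cast
      rw [e1]
      try ring_nf
  have hHH : HH y = 2*y^2 + ∑' i : ℕ, a (i+2) * y^(2*i+4) := by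
    rw [HH, Summable.tsum_eq_zero_add sA]
    congr 1
    · norm_num [a1]
  have hGG : y * GG y = ∑' i : ℕ, b (i+1) * y^(2*i+4) := by
    rw [GG, ← tsum_mul_left]
    apply tsum_congr; intro i
    ring
  have hG1 : y^2 * G1 y = ∑' i : ℕ, (2*(i:ℝ)+3) * b (i+1) * y^(2*i+4) := by
    rw [G1, ← tsum_mul_left]
    apply tsum_congr; intro i
    ring
  have expand : (1 - y^2) * G1 y = G1 y - y^2 * G1 y := by ring
  rw [expand, hG1, hGG, hHH, lhs]
  have comb : (2*y^2 + ∑' i : ℕ, a (i+2) * y^(2*i+4)) + (∑' i : ℕ, b (i+1) * y^(2*i+4))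
      + (∑' i : ℕ, (2*(i:ℝ)+3) * b (i+1) * y^(2*i+4))
      = 2*y^2 + ∑' i : ℕ, (a (i+2) * y^(2*i+4) + b (i+1) * y^(2*i+4)
          + (2*(i:ℝ)+3) * b (i+1) * y^(2*i+4)) := by
    rw [Summable.tsum_add (sA'.add sb4) sb34, Summable.tsum_add sA' sb4]; ring
  have goal2 : ∑' i : ℕ, (2*(i:ℝ)+5) * b (i+2) * y^(2*i+4)
      = ∑' i : ℕ, (a (i+2) * y^(2*i+4) + b (i+1) * y^(2*i+4)
          + (2*(i:ℝ)+3) * b (i+1) * y^(2*i+4)) := by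
    apply tsum_congr; intro i
    linear_combination y^(2*i+4) * rec_b i
  linarith [comb, goal2, congrArg (fun z => z) comb]

-- Analytic side
noncomputable def phi (x : ℝ) : ℝ := 2 * Real.arcsin x ^ 2
noncomputable def phi1 (x : ℝ) : ℝ := 4 * Real.arcsin x / Real.sqrt (1 - x^2)
noncomputable def psi (x : ℝ) : ℝ := 2/3 * Real.arcsin x ^ 3 / Real.sqrt (1 - x^2)

lemma sqrt_pos_of {y : ℝ} (h : y^2 < 1) : 0 < Real.sqrt (1 - y^2) :=
  Real.sqrt_pos.2 (by linarith)

lemma sqrt_sq_of {y : ℝ} (h : y^2 < 1) : Real.sqrt (1 - y^2)^2 = 1 - y^2 :=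
  Real.sq_sqrt (by linarith)

lemma ne_one_of {y : ℝ} (h : y^2 < 1) : y ≠ 1 := by
  intro e; rw [e] at h; norm_num at h

lemma ne_neg_one_of {y : ℝ} (h : y^2 < 1) : y ≠ -1 := by
  intro e; rw [e] at h; norm_num at h

lemma hasDerivAt_sqrt1 {y : ℝ} (h : y^2 < 1) :
    HasDerivAt (fun x : ℝ => Real.sqrt (1-x^2)) (-y / Real.sqrt (1-y^2)) y := by
  have h1 : HasDerivAt (fun x : ℝ => 1 - x^2) (-(2*y)) y := by
    simpa using ((hasDerivAt_pow 2 y).const_sub 1)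
  have h2 : HasDerivAt Real.sqrt (1/(2*Real.sqrt (1-y^2))) (1-y^2) :=
    Real.hasDerivAt_sqrt (by nlinarith)
  have := h2.comp y h1
  refine this.congr_deriv ?_
  have hc := (sqrt_pos_of h).ne'
  field_simp

lemma dphi {y : ℝ} (h : y^2 < 1) : HasDerivAt phi (phi1 y) y := by
  have ha := Real.hasDerivAt_arcsin (ne_neg_one_of h) (ne_one_of h)
  have := (ha.pow 2).const_mul 2
  refine this.congr_deriv ?_
  have hc := (sqrt_pos_of h).ne'
  unfold phi1
  field_simp
  ring

lemma dphi1 {y : ℝ} (h : y^2 < 1) : HasDerivAt phi1 ((4 + y * phi1 y)/(1-y^2)) y := by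
  have ha := Real.hasDerivAt_arcsin (ne_neg_one_of h) (ne_one_of h)
  have hc := sqrt_pos_of h
  have hcne := hc.ne'
  have hsq := sqrt_sq_of h
  have hinv : HasDerivAt (fun x : ℝ => (Real.sqrt (1-x^2))⁻¹)
      (y / Real.sqrt (1-y^2)^3) y := by
    have h5 := (hasDerivAt_sqrt1 h).inv hcne
    refine h5.congr_deriv ?_
    field_simp
  have hnum : HasDerivAt (fun x : ℝ => 4 * Real.arcsin x) (4 / Real.sqrt (1-y^2)) y := by
    have h6 := ha.const_mul 4
    refine h6.congr_deriv ?_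
    ring
  have heq : phi1 = fun x : ℝ => (4 * Real.arcsin x) * (Real.sqrt (1-x^2))⁻¹ := by
    funext x; unfold phi1; rw [div_eq_mul_inv]
  have hprod : HasDerivAt phi1
      (4 / Real.sqrt (1-y^2) * (Real.sqrt (1-y^2))⁻¹
        + 4 * Real.arcsin y * (y / Real.sqrt (1-y^2)^3)) y := by
    rw [heq]; exact hnum.mul hinv
  refine hprod.congr_deriv ?_
  unfold phi1
  set C := Real.sqrt (1-y^2) with hC
  rw [← hsq]
  field_simp

lemma dpsi {y : ℝ} (h : y^2 < 1) : HasDerivAt psi ((phi y + y * psi y)/(1-y^2)) y := by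
  have ha := Real.hasDerivAt_arcsin (ne_neg_one_of h) (ne_one_of h)
  have hc := sqrt_pos_of h
  have hcne := hc.ne'
  have hsq := sqrt_sq_of h
  have hinv : HasDerivAt (fun x : ℝ => (Real.sqrt (1-x^2))⁻¹)
      (y / Real.sqrt (1-y^2)^3) y := by
    have h5 := (hasDerivAt_sqrt1 h).inv hcne
    refine h5.congr_deriv ?_
    field_simp
  have hnum : HasDerivAt (fun x : ℝ => 2/3 * Real.arcsin x ^ 3)
      (2 * Real.arcsin y ^ 2 / Real.sqrt (1-y^2)) y := by
    have h6 := (ha.pow 3).const_mul (2/3)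
    refine h6.congr_deriv ?_
    field_simp
    ring
  have heq : psi = fun x : ℝ => (2/3 * Real.arcsin x ^ 3) * (Real.sqrt (1-x^2))⁻¹ := by
    funext x; unfold psi; rw [div_eq_mul_inv]
  have hprod : HasDerivAt psi
      (2 * Real.arcsin y ^ 2 / Real.sqrt (1-y^2) * (Real.sqrt (1-y^2))⁻¹
        + 2/3 * Real.arcsin y ^ 3 * (y / Real.sqrt (1-y^2)^3)) y := by
    rw [heq]; exact hnum.mul hinv
  refine hprod.congr_deriv ?_
  unfold phi psi
  set C := Real.sqrt (1-y^2) with hC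
  rw [← hsq]
  field_simp

-- the endpoint
noncomputable def t0 : ℝ := Real.sqrt 3 / 2

lemma t0_pos : 0 < t0 := by
  unfold t0; positivity

lemma t0_lt : t0 < 9/10 := by
  unfold t0
  rw [div_lt_iff₀ (by norm_num)]
  have : Real.sqrt 3 < 9/5 := by
    rw [show (9/5:ℝ) = Real.sqrt ((9/5)^2) by rw [Real.sqrt_sq (by norm_num)]]
    apply Real.sqrt_lt_sqrt (by norm_num) (by norm_num)
  linarith

lemma Icc_sub_I : Set.Icc (0:ℝ) t0 ⊆ I := by
  intro y hy
  constructor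
  · linarith [hy.1]
  · linarith [hy.2, t0_lt]

lemma sq_lt_of_Icc {y : ℝ} (hy : y ∈ Set.Icc (0:ℝ) t0) : y^2 < 1 := by
  have h1 := hy.1
  have h2 := hy.2
  have := t0_lt
  nlinarith

-- generic uniqueness lemmas
lemma uniq0 (F Φ d : ℝ → ℝ)
    (hF : ∀ y ∈ Set.Icc (0:ℝ) t0, HasDerivAt F (d y) y)
    (hΦ : ∀ y ∈ Set.Icc (0:ℝ) t0, HasDerivAt Φ (d y) y)
    (h0 : F 0 = Φ 0) : ∀ y ∈ Set.Icc (0:ℝ) t0, F y = Φ y := by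
  have hP : ∀ y ∈ Set.Icc (0:ℝ) t0, HasDerivAt (fun x => F x - Φ x) 0 y := by
    intro y hy
    exact ((hF y hy).sub (hΦ y hy)).congr_deriv (sub_self _)
  have hcont : ContinuousOn (fun x => F x - Φ x) (Set.Icc 0 t0) :=
    fun y hy => ((hP y hy).continuousAt).continuousWithinAt
  have hconst := constant_of_has_deriv_right_zero hcont
    (fun y hy => (hP y (Set.Ico_subset_Icc_self hy)).hasDerivWithinAt)
  intro y hy
  have := hconst y hy
  linarith [this, h0]

lemma uniq (F Φ w v : ℝ → ℝ)
    (hF : ∀ y ∈ Set.Icc (0:ℝ) t0, HasDerivAt F ((w y + y * F y)/(1-y^2)) y)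
    (hΦ : ∀ y ∈ Set.Icc (0:ℝ) t0, HasDerivAt Φ ((v y + y * Φ y)/(1-y^2)) y)
    (hwv : ∀ y ∈ Set.Icc (0:ℝ) t0, w y = v y)
    (h0 : F 0 = Φ 0) : ∀ y ∈ Set.Icc (0:ℝ) t0, F y = Φ y := by
  set P := fun x => Real.sqrt (1-x^2) * (F x - Φ x) with hPdef
  have hP : ∀ y ∈ Set.Icc (0:ℝ) t0, HasDerivAt P 0 y := by
    intro y hy
    have h2 := sq_lt_of_Icc hy
    have hc := sqrt_pos_of h2
    have hsq := sqrt_sq_of h2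
    have := (hasDerivAt_sqrt1 h2).mul ((hF y hy).sub (hΦ y hy))
    refine this.congr_deriv ?_
    rw [hwv y hy, ← hsq]
    have hcne := hc.ne'
    field_simp
    simp only [Pi.sub_apply, hsq]
    ring
  have hcont : ContinuousOn P (Set.Icc 0 t0) :=
    fun y hy => ((hP y hy).continuousAt).continuousWithinAt
  have hconst := constant_of_has_deriv_right_zero hcont
    (fun y hy => (hP y (Set.Ico_subset_Icc_self hy)).hasDerivWithinAt)
  intro y hy
  have hy2 := sq_lt_of_Icc hy
  have hc := sqrt_pos_of hy2
  have hPy := hconst y hy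
  have hP0 : P 0 = 0 := by
    simp only [hPdef]
    rw [h0]
    ring
  rw [hP0] at hPy
  have : F y - Φ y = 0 := by
    by_contra hne
    exact hne (by
      have := mul_eq_zero.1 hPy
      rcases this with h | h
      · exact absurd h hc.ne'
      · exact h)
  linarith

-- values at 0
lemma HH0 : HH 0 = 0 := by
  have h : ∀ i : ℕ, a (i+1) * (0:ℝ)^(2*i+2) = 0 := by
    intro i
    rw [zero_pow (by omega : 2*i+2 ≠ 0), mul_zero]
  calc HH 0 = ∑' _i : ℕ, (0:ℝ) := tsum_congr h
    _ = 0 := tsum_zero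

lemma H10 : H1 0 = 0 := by
  have h : ∀ i : ℕ, (2*(i:ℝ)+2) * a (i+1) * (0:ℝ)^(2*i+1) = 0 := by
    intro i
    rw [zero_pow (by omega : 2*i+1 ≠ 0), mul_zero]
  calc H1 0 = ∑' _i : ℕ, (0:ℝ) := tsum_congr h
    _ = 0 := tsum_zero

lemma GG0 : GG 0 = 0 := by
  have h : ∀ i : ℕ, b (i+1) * (0:ℝ)^(2*i+3) = 0 := by
    intro i
    rw [zero_pow (by omega : 2*i+3 ≠ 0), mul_zero]
  calc GG 0 = ∑' _i : ℕ, (0:ℝ) := tsum_congr h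
    _ = 0 := tsum_zero

lemma phi0 : phi 0 = 0 := by simp [phi]
lemma phi10 : phi1 0 = 0 := by simp [phi1]
lemma psi0 : psi 0 = 0 := by simp [psi]

lemma mem_I_of_Icc {y : ℝ} (hy : y ∈ Set.Icc (0:ℝ) t0) : y ∈ I := Icc_sub_I hy

lemma one_sub_ne {y : ℝ} (h : y^2 < 1) : (1:ℝ) - y^2 ≠ 0 := by nlinarith

lemma step1 : ∀ y ∈ Set.Icc (0:ℝ) t0, H1 y = phi1 y := by
  apply uniq H1 phi1 (fun _ => 4) (fun _ => 4)
  · intro y hy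
    have hI := mem_I_of_Icc hy
    have h2 := sq_lt_of_Icc hy
    have := hasDerivAt_H1 hI
    have he : H2 y = (4 + y * H1 y)/(1-y^2) := by
      rw [eq_div_iff (one_sub_ne h2), mul_comm]
      exact odeH (mem_I_abs hI)
    rwa [he] at this
  · intro y hy
    exact dphi1 (sq_lt_of_Icc hy)
  · intro y _; rfl
  · rw [H10, phi10]

lemma step2 : ∀ y ∈ Set.Icc (0:ℝ) t0, HH y = phi y := by
  apply uniq0 HH phi phi1
  · intro y hy
    have := hasDerivAt_HH (mem_I_of_Icc hy)
    rwa [step1 y hy] at this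
  · intro y hy
    exact dphi (sq_lt_of_Icc hy)
  · rw [HH0, phi0]

lemma step3 : ∀ y ∈ Set.Icc (0:ℝ) t0, GG y = psi y := by
  apply uniq GG psi HH phi
  · intro y hy
    have hI := mem_I_of_Icc hy
    have h2 := sq_lt_of_Icc hy
    have := hasDerivAt_GG hI
    have he : G1 y = (HH y + y * GG y)/(1-y^2) := by
      rw [eq_div_iff (one_sub_ne h2), mul_comm]
      exact odeG (mem_I_abs hI)
    rwa [he] at this
  · intro y hy
    exact dpsi (sq_lt_of_Icc hy)
  · exact step2
  · rw [GG0, psi0]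

lemma t0_mem : t0 ∈ Set.Icc (0:ℝ) t0 := ⟨t0_pos.le, le_refl _⟩

lemma sqrt3_sq : Real.sqrt 3 ^ 2 = 3 := Real.sq_sqrt (by norm_num)

lemma t0_sq : t0^2 = 3/4 := by
  unfold t0
  rw [div_pow, sqrt3_sq]
  norm_num

lemma arcsin_t0 : Real.arcsin t0 = π/3 := by
  have hs : Real.sin (π/3) = Real.sqrt 3 / 2 := Real.sin_pi_div_three
  have hp := Real.pi_pos
  rw [show t0 = Real.sin (π/3) by rw [hs]; rfl]
  apply Real.arcsin_sin
  · linarith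
  · linarith

lemma sqrt_quarter : Real.sqrt (1 - t0^2) = 1/2 := by
  rw [t0_sq]
  rw [show (1:ℝ) - 3/4 = (1/2)^2 by norm_num]
  exact Real.sqrt_sq (by norm_num)

lemma psi_t0 : psi t0 = 4 * π^3 / 81 := by
  unfold psi
  rw [arcsin_t0, sqrt_quarter]
  ring

lemma GG_t0_eq : GG t0 = t0 * (∑' i : ℕ, (3:ℝ)^(i+1) * (∑ j ∈ Finset.range (i+1), (1:ℝ)/((j:ℝ)+1)^2) / ((2*((i:ℝ)+1)+1) * ((Nat.choose (2*(i+1)) (i+1)) : ℝ))) := by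
  rw [GG, ← tsum_mul_left]
  apply tsum_congr
  intro i
  have hcb : ((Nat.choose (2*(i+1)) (i+1)) : ℝ) = c (i+1) := by
    simp [c, Nat.centralBinom]
  rw [hcb]
  have hpow2 : t0^(2*i+3) = (3:ℝ)^(i+1)/4^(i+1) * t0 := by
    rw [show 2*i+3 = 2*(i+1)+1 by ring, pow_succ, pow_mul, t0_sq]
    rw [show ((3:ℝ)/4)^(i+1) = 3^(i+1)/4^(i+1) from div_pow 3 4 (i+1)]
  rw [hpow2]
  have hXc : ((2:ℝ)*((i:ℝ)+1)+1) * c (i+1) ≠ 0 := by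
    have := c_pos (i+1)
    positivity
  have h4 : ((4:ℝ))^(i+1) ≠ 0 := by positivity
  unfold b h2
  have hcast : (2*((i+1:ℕ):ℝ)+1) = (2*((i:ℝ)+1)+1) := by push_cast; ring
  rw [hcast]
  field_simp

theorem final : (∑' i : ℕ, (3:ℝ)^(i+1) * (∑ j ∈ Finset.range (i+1), (1:ℝ)/((j:ℝ)+1)^2) / ((2*((i:ℝ)+1)+1) * ((Nat.choose (2*(i+1)) (i+1)) : ℝ))) = 8 * Real.pi^3 / (81 * Real.sqrt 3) := by
  have h1 := step3 t0 t0_mem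
  rw [psi_t0, GG_t0_eq] at h1
  have hs3 : (0:ℝ) < Real.sqrt 3 := Real.sqrt_pos.2 (by norm_num)
  have ht0 : t0 ≠ 0 := t0_pos.ne'
  set S := (∑' i : ℕ, (3:ℝ)^(i+1) * (∑ j ∈ Finset.range (i+1), (1:ℝ)/((j:ℝ)+1)^2) / ((2*((i:ℝ)+1)+1) * ((Nat.choose (2*(i+1)) (i+1)) : ℝ)))
  have : S = (4 * π^3/81) / t0 := by
    rw [← h1]
    field_simp
  rw [this]
  unfold t0
  rw [div_div_eq_mul_div, div_eq_div_iff (by positivity) (by positivity)]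
  ring_nf
  try nlinarith [sqrt3_sq, hs3]


end P11

theorem stmt_11 : (∑' i : ℕ, (3:ℝ)^(i+1) * (∑ j ∈ Finset.range (i+1), (1:ℝ)/((j:ℝ)+1)^2) / ((2*((i:ℝ)+1)+1) * ((Nat.choose (2*(i+1)) (i+1)) : ℝ))) = 8 * Real.pi^3 / (81 * Real.sqrt 3) := P11.final
end
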